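/- arXiv:2207.07607 — 5 statements merged into one kernel-verified Lean document; each statement's English description precedes it below -/
import Mathlib

section
/- Let ε ∈ (0, 1/120) and δ ∈ (2ε, 1/60). Let G be a bipartite graph and let H be a (β, (1−ε)β)-EDCS of G, where β > (1−ε)β ≥ 1. Let Vmid := {v : deg_H(v) ∈ [0.4β, 0.6β]}, Vlow := {v : deg_H(v) ∈ [0, 0.2β]}, and H' := H[Vlow, Vmid]. If μ(H) ≤ (2/3 + δ)·μ(G), then μ(H') ≥ (2/3 − 120·√δ)·μ(G). -/
open scoped Classical

noncomputable section

variable {V : Type*}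

/-- `M` is a matching of `G`: a set of edges of `G` that are pairwise vertex-disjoint. -/
def IsMatchingSet (G : SimpleGraph V) (M : Set (Sym2 V)) : Prop :=
  M ⊆ G.edgeSet ∧ M.Pairwise fun e f => ∀ v : V, v ∈ e → v ∉ f

/-- The set of vertices matched by the edge set `M`. -/
def mVerts (M : Set (Sym2 V)) : Set V := {v | ∃ e ∈ M, v ∈ e}

/-- The matching number of `G`. -/
def nu (G : SimpleGraph V) : ℕ :=
  sSup {n | ∃ M : Set (Sym2 V), IsMatchingSet G M ∧ M.ncard = n}

/-- The bipartite subgraph of `G` consisting of the edges of `G` with one endpoint in `X`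
and the other endpoint in `Y`. -/
def between (G : SimpleGraph V) (X Y : Set V) : SimpleGraph V where
  Adj u v := G.Adj u v ∧ ((u ∈ X ∧ v ∈ Y) ∨ (u ∈ Y ∧ v ∈ X))
  symm := ⟨fun u v h => ⟨h.1.symm, h.2.elim (fun hh => Or.inr ⟨hh.2, hh.1⟩) (fun hh => Or.inl ⟨hh.2, hh.1⟩)⟩⟩
  loopless := ⟨fun v h => G.loopless.irrefl v h.1⟩

/-- The induced subgraph of `G` on the vertex set `U` (on the same vertex type). -/
def inducedOn (G : SimpleGraph V) (U : Set V) : SimpleGraph V where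
  Adj u v := G.Adj u v ∧ u ∈ U ∧ v ∈ U
  symm := ⟨fun u v h => ⟨h.1.symm, h.2.2, h.2.1⟩⟩
  loopless := ⟨fun v h => G.loopless.irrefl v h.1⟩

/-- The degree of `v` in `H`. -/
def deg (H : SimpleGraph V) (v : V) : ℕ := (H.neighborSet v).ncard

/-- `H` is a `(β, βm)`-EDCS of `G`. -/
def IsEDCS (G H : SimpleGraph V) (β βm : ℝ) : Prop :=
  H ≤ G ∧ (∀ u v, H.Adj u v → (deg H u + deg H v : ℝ) ≤ β) ∧
    (∀ u v, G.Adj u v → ¬ H.Adj u v → βm ≤ (deg H u + deg H v : ℝ))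

/-- The neighborhood of a set `A` in `H`. -/
def nbhd (H : SimpleGraph V) (A : Set V) : Set V := {v | ∃ a ∈ A, H.Adj a v}

/-- The edges of `M` with one endpoint in `X` and the other endpoint in `Y`. -/
def crossE (M : Set (Sym2 V)) (X Y : Set V) : Set (Sym2 V) :=
  {e | e ∈ M ∧ ∃ u v, e = s(u, v) ∧ u ∈ X ∧ v ∈ Y}

/-- `M` is a maximal matching of `G`. -/
def IsMaximalMatching (G : SimpleGraph V) (M : Set (Sym2 V)) : Prop :=
  IsMatchingSet G M ∧ ∀ M' : Set (Sym2 V), IsMatchingSet G M' → M ⊆ M' → M' = M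


section Infra
variable [Fintype V]

omit [Fintype V] in
lemma nu_set_nonempty (G : SimpleGraph V) :
    {n | ∃ M : Set (Sym2 V), IsMatchingSet G M ∧ M.ncard = n}.Nonempty :=
  ⟨0, ∅, ⟨Set.empty_subset _, Set.pairwise_empty _⟩, Set.ncard_empty _⟩

lemma nu_set_bddAbove (G : SimpleGraph V) :
    BddAbove {n | ∃ M : Set (Sym2 V), IsMatchingSet G M ∧ M.ncard = n} := by
  refine ⟨Fintype.card (Sym2 V), ?_⟩
  rintro n ⟨M, _, rfl⟩
  simpa [Set.ncard_univ, Nat.card_eq_fintype_card] using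
    Set.ncard_le_ncard (Set.subset_univ M) Set.finite_univ

lemma card_le_nu (G : SimpleGraph V) {M : Set (Sym2 V)} (h : IsMatchingSet G M) :
    M.ncard ≤ nu G :=
  le_csSup (nu_set_bddAbove G) ⟨M, h, rfl⟩

/-- König-type cover via Hall with defects. -/
lemma exists_koenig_cover {G H : SimpleGraph V} (hle : H ≤ G)
    (hbip : G.Colorable 2) :
    ∃ C : Finset V, (∀ u v, H.Adj u v → u ∈ C ∨ v ∈ C) ∧ C.card ≤ nu H := by
  classical
  obtain ⟨col⟩ := hbip
  have hcol : ∀ {u v}, H.Adj u v → col u ≠ col v := fun h => col.valid (hle h)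
  set A : Finset V := Finset.univ.filter (fun v => col v = 0) with hA
  set nf : V → Finset V := fun v => H.neighborFinset v with hnf
  set φ : Finset V → ℕ := fun s => s.card - (s.biUnion nf).card with hφ
  set k : ℕ := (A.powerset.sup φ) with hk
  have hkle : ∀ s : Finset V, s ⊆ A → s.card ≤ (s.biUnion nf).card + k := by
    intro s hs
    have h1 : φ s ≤ k := Finset.le_sup (Finset.mem_powerset.2 hs)
    simp only [hφ] at h1; omega
  -- the Hall system
  set ι := {x : V // x ∈ A}
  set t : ι → Finset (V ⊕ Fin k) := fun a =>
    (nf a.1).image Sum.inl ∪ (Finset.univ : Finset (Fin k)).image Sum.inr with ht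
  have hHall : ∀ s : Finset ι, s.card ≤ (s.biUnion t).card := by
    intro s
    rcases s.eq_empty_or_nonempty with rfl | ⟨a0, ha0⟩
    · simp
    · set s' : Finset V := s.image Subtype.val with hs'
      have hcard : s.card = s'.card := (Finset.card_image_of_injective _ Subtype.val_injective).symm
      have hsub : s' ⊆ A := by
        intro x hx; simp only [hs', Finset.mem_image] at hx
        obtain ⟨a, _, rfl⟩ := hx; exact a.2
      have hsub1 : (s'.biUnion nf).image Sum.inl ⊆ s.biUnion t := by
        intro x hx
        simp only [Finset.mem_image, Finset.mem_biUnion] at hx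
        obtain ⟨b, ⟨v, hv, hb⟩, rfl⟩ := hx
        simp only [hs', Finset.mem_image] at hv
        obtain ⟨a, ha, rfl⟩ := hv
        exact Finset.mem_biUnion.2 ⟨a, ha, by
          simp only [ht, Finset.mem_union, Finset.mem_image]
          exact Or.inl ⟨b, hb, rfl⟩⟩
      have hsub2 : (Finset.univ : Finset (Fin k)).image Sum.inr ⊆ s.biUnion t := by
        intro x hx
        exact Finset.mem_biUnion.2 ⟨a0, ha0, by
          simp only [ht, Finset.mem_union]; exact Or.inr hx⟩
      have hdisj : Disjoint ((s'.biUnion nf).image Sum.inl)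
          ((Finset.univ : Finset (Fin k)).image Sum.inr) := by
        simp only [Finset.disjoint_left, Finset.mem_image]
        rintro x ⟨b, _, rfl⟩ ⟨y, _, h⟩; exact Sum.inl_ne_inr h.symm
      calc s.card = s'.card := hcard
        _ ≤ (s'.biUnion nf).card + k := hkle s' hsub
        _ = ((s'.biUnion nf).image Sum.inl).card +
            ((Finset.univ : Finset (Fin k)).image Sum.inr).card := by
            rw [Finset.card_image_of_injective _ Sum.inl_injective,
              Finset.card_image_of_injective _ Sum.inr_injective, Finset.card_univ,
              Fintype.card_fin]
        _ = (((s'.biUnion nf).image Sum.inl) ∪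
            ((Finset.univ : Finset (Fin k)).image Sum.inr)).card :=
            (Finset.card_union_of_disjoint hdisj).symm
        _ ≤ (s.biUnion t).card := Finset.card_le_card (Finset.union_subset hsub1 hsub2)
  obtain ⟨f, hfinj, hft⟩ := (Finset.all_card_le_biUnion_card_iff_exists_injective t).1 hHall
  -- extract neighbor from t-membership
  have hmem : ∀ (a : ι) (b : V), f a = Sum.inl b → b ∈ nf a.1 := by
    intro a b hb
    have h2 := hft a
    rw [hb] at h2
    simp only [ht, Finset.mem_union, Finset.mem_image] at h2
    rcases h2 with ⟨c, hc, hcb⟩ | ⟨y, _, hy⟩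
    · obtain rfl : c = b := Sum.inl_injective hcb
      exact hc
    · exact absurd hy (by simp)
  have hadjmem : ∀ (a : ι) (b : V), f a = Sum.inl b → H.Adj a.1 b := by
    intro a b hb
    have := hmem a b hb
    simpa [hnf, SimpleGraph.mem_neighborFinset] using this
  have hcolA : ∀ (a : ι) (b : V), f a = Sum.inl b → b ∉ A := by
    intro a b hb hbA
    have h0a : col a.1 = 0 := by
      have := a.2; simp only [hA, Finset.mem_filter] at this; exact this.2
    have h0b : col b = 0 := by simp only [hA, Finset.mem_filter] at hbA; exact hbA.2
    exact hcol (hadjmem a b hb) (h0a.trans h0b.symm)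
  set D : Finset ι := Finset.univ.filter (fun a : ι => (f a).isLeft) with hD
  set bfun : ι → V := fun a => Sum.elim id (fun _ => a.1) (f a) with hbfun
  have hbD : ∀ a ∈ D, f a = Sum.inl (bfun a) := by
    intro a ha
    simp only [hD, Finset.mem_filter] at ha
    rcases hx : f a with b | y
    · simp [hbfun, hx]
    · rw [hx] at ha; simp at ha
  have hDcard : A.card ≤ D.card + k := by
    have h1 : (Finset.univ : Finset ι).card = A.card := by simp [ι, Fintype.card_coe]
    have h2 : ((Finset.univ : Finset ι).filter (fun a : ι => ¬ (f a).isLeft)).card ≤ k := by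
      have hmap : ∀ a ∈ (Finset.univ : Finset ι).filter (fun a : ι => ¬ (f a).isLeft),
          f a ∈ (Finset.univ : Finset (Fin k)).image Sum.inr := by
        intro a ha
        simp only [Finset.mem_filter] at ha
        rcases hx : f a with b | y
        · rw [hx] at ha; simp at ha
        · simp
      have := Finset.card_le_card_of_injOn f hmap hfinj.injOn
      simpa [Finset.card_image_of_injective _ Sum.inr_injective] using this
    have h3 := Finset.card_filter_add_card_filter_not
      (s := (Finset.univ : Finset ι)) (p := fun a : ι => (f a).isLeft)
    have h4 : D.card = ((Finset.univ : Finset ι).filter (fun a : ι => (f a).isLeft)).card := by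
      rw [hD]
    omega
  set edgf : ι → Sym2 V := fun a => s(a.1, bfun a) with hedgf
  set M0 : Finset (Sym2 V) := D.image edgf with hM0
  have hedge_inj : ∀ a ∈ D, ∀ a' ∈ D, edgf a = edgf a' → a = a' := by
    intro a ha a' ha' he
    simp only [hedgf] at he
    rcases Sym2.eq_iff.1 he with ⟨h1, h2⟩ | ⟨h1, h2⟩
    · exact Subtype.ext h1
    · exact absurd (h1 ▸ a.2) (hcolA a' (bfun a') (hbD a' ha'))
  have hM0card : M0.card = D.card := Finset.card_image_of_injOn hedge_inj
  have hM0match : IsMatchingSet H (↑M0 : Set (Sym2 V)) := by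
    constructor
    · intro e he
      simp only [hM0, Finset.coe_image, Set.mem_image, Finset.mem_coe] at he
      obtain ⟨a, ha, rfl⟩ := he
      exact (H.mem_edgeSet).2 (hadjmem a _ (hbD a ha))
    · intro e he e' he' hne v hv hv'
      simp only [hM0, Finset.coe_image, Set.mem_image, Finset.mem_coe] at he he'
      obtain ⟨a, ha, rfl⟩ := he
      obtain ⟨a', ha', rfl⟩ := he'
      have hane : a ≠ a' := fun h => hne (by rw [h])
      simp only [hedgf, Sym2.mem_iff] at hv hv'
      rcases hv with rfl | rfl <;> rcases hv' with h | h
      · exact hane (Subtype.ext h)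
      · exact (hcolA a' (bfun a') (hbD a' ha')) (by rw [← h]; exact a.2)
      · exact (hcolA a (bfun a) (hbD a ha)) (by rw [h]; exact a'.2)
      · refine hane (hfinj ?_)
        rw [hbD a ha, hbD a' ha', h]
  have hnuD : D.card ≤ nu H := by
    have := card_le_nu H hM0match
    rwa [Set.ncard_coe_finset, hM0card] at this
  have hAk : A.card ≤ nu H + k := le_trans hDcard (by omega)
  have hfin2 : ∀ x : Fin 2, x = 0 ∨ x = 1 := by decide
  by_cases hk0 : k = 0
  · refine ⟨A, ?_, by omega⟩
    intro u v huv
    have hne := hcol huv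
    rcases hfin2 (col u) with h | h
    · exact Or.inl (by simp [hA, h])
    · rcases hfin2 (col v) with h' | h'
      · exact Or.inr (by simp [hA, h'])
      · exact absurd (h.trans h'.symm) hne
  · obtain ⟨sx, hsxmem, hsup⟩ := Finset.exists_mem_eq_sup A.powerset ⟨∅, by simp⟩ φ
    have hsxA : sx ⊆ A := Finset.mem_powerset.1 hsxmem
    have hφsx : φ sx = k := hsup.symm
    have hsxcard : sx.card = (sx.biUnion nf).card + k := by
      simp only [hφ] at hφsx; omega
    set C : Finset V := (A \ sx) ∪ sx.biUnion nf with hC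
    have hcover0 : ∀ u v, H.Adj u v → col u = 0 → u ∈ C ∨ v ∈ C := by
      intro u v huv hu0
      have huA : u ∈ A := by simp [hA, hu0]
      by_cases husx : u ∈ sx
      · refine Or.inr ?_
        simp only [hC, Finset.mem_union]
        exact Or.inr (Finset.mem_biUnion.2 ⟨u, husx, by
          simp [hnf, SimpleGraph.mem_neighborFinset, huv]⟩)
      · refine Or.inl ?_
        simp only [hC, Finset.mem_union, Finset.mem_sdiff]
        exact Or.inl ⟨huA, husx⟩
    refine ⟨C, ?_, ?_⟩
    · intro u v huv
      rcases hfin2 (col u) with h | h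
      · exact hcover0 u v huv h
      · rcases hfin2 (col v) with h' | h'
        · exact (hcover0 v u huv.symm h').symm
        · exact absurd (h.trans h'.symm) (hcol huv)
    · have h1 : C.card ≤ (A \ sx).card + (sx.biUnion nf).card := Finset.card_union_le _ _
      have h2 : (A \ sx).card = A.card - sx.card := Finset.card_sdiff_of_subset hsxA
      have h3 : sx.card ≤ A.card := Finset.card_le_card hsxA
      omega


lemma exists_nu_matching (G : SimpleGraph V) :
    ∃ M : Set (Sym2 V), IsMatchingSet G M ∧ M.ncard = nu G :=
  Nat.sSup_mem (nu_set_nonempty G) (nu_set_bddAbove G)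

lemma deg_eq_card (H : SimpleGraph V) (v : V) :
    deg H v = (H.neighborFinset v).card := by
  rw [deg, SimpleGraph.neighborFinset, Set.ncard_eq_toFinset_card']

end Infra

/-- f(t) = t/(β−t) -/
def fdeg (β t : ℝ) : ℝ := t / (β - t)

/-- clipped s₀ − t -/
def pdeg (β ε t : ℝ) : ℝ := max ((1-ε)*β - t) 0

/-- q̃ -/
def qdeg (β ε t : ℝ) : ℝ := max ((2 - 4*ε + fdeg β t - fdeg β (pdeg β ε t)) / 2) 0

section Numeric
variable {β ε : ℝ}
set_option maxHeartbeats 1000000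

lemma beta_gt_one (hε0 : 0 < ε) (hε : ε < 1/120) (hβ : 1 ≤ (1-ε)*β) : (1:ℝ) < β := by
  by_contra h
  push_neg at h
  have h1 : (0:ℝ) < 1 - ε := by linarith
  have h2 : (0:ℝ) < β := by nlinarith
  nlinarith

lemma fdeg_nonneg {x : ℝ} (h0 : 0 ≤ x) (h1 : x < β) : 0 ≤ fdeg β x :=
  div_nonneg h0 (by linarith)

lemma fdeg_mono {x y : ℝ} (h0 : 0 ≤ x) (hxy : x ≤ y) (h1 : y < β) : fdeg β x ≤ fdeg β y := by
  unfold fdeg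
  rw [div_le_div_iff₀ (by linarith) (by linarith)]
  nlinarith

lemma pdeg_nonneg (t : ℝ) : 0 ≤ pdeg β ε t := le_max_right _ _

lemma pdeg_lt (hε0 : 0 < ε) (hε : ε < 1/120) (hβ : 1 ≤ (1-ε)*β) (t : ℝ) (h0 : 0 ≤ t) : pdeg β ε t < β := by
  have hb := beta_gt_one hε0 hε hβ
  unfold pdeg
  rw [max_lt_iff]
  constructor <;> nlinarith

/-- E ≥ 0 : f x + f (P x) ≥ T -/
lemma E_nonneg (hε0 : 0 < ε) (hε : ε < 1/120) (hβ : 1 ≤ (1-ε)*β) {x : ℝ} (h0 : 0 ≤ x) (h1 : x < β) :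
    2 - 4*ε ≤ fdeg β x + fdeg β (pdeg β ε x) := by
  have hb := beta_gt_one hε0 hε hβ
  by_cases hx : (1-ε)*β - x ≤ 0
  · -- x ≥ s₀ : f x ≥ f s₀ = (1-ε)/ε ≥ 2
    have hp : pdeg β ε x = 0 := by unfold pdeg; exact max_eq_right hx
    rw [hp]
    have h2 : fdeg β ((1-ε)*β) ≤ fdeg β x := fdeg_mono (by nlinarith) (by linarith) h1
    have h3 : fdeg β ((1-ε)*β) = (1-ε)/ε := by
      unfold fdeg
      rw [show β - (1-ε)*β = ε*β by ring]
      rw [div_eq_div_iff (by nlinarith) (ne_of_gt hε0)]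
      ring
    have h4 : (2:ℝ) - 4*ε ≤ (1-ε)/ε := by
      rw [le_div_iff₀ hε0]; nlinarith
    have h5 : fdeg β (0:ℝ) = 0 := by unfold fdeg; simp
    rw [h5]
    rw [h3] at h2
    linarith
  · push_neg at hx
    have hp : pdeg β ε x = (1-ε)*β - x := by unfold pdeg; exact max_eq_left (le_of_lt hx)
    rw [hp]
    unfold fdeg
    have d1 : 0 < β - x := by linarith
    have d2 : 0 < β - ((1-ε)*β - x) := by nlinarith
    rw [div_add_div _ _ (ne_of_gt d1) (ne_of_gt d2), le_div_iff₀ (by positivity)]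
    nlinarith [sq_nonneg (β - x - (β - ((1-ε)*β - x))), sq_nonneg ε, sq_nonneg (ε*β)]

/-- q̃ ≤ f -/
lemma qdeg_le_fdeg (hε0 : 0 < ε) (hε : ε < 1/120) (hβ : 1 ≤ (1-ε)*β) {x : ℝ} (h0 : 0 ≤ x) (h1 : x < β) : qdeg β ε x ≤ fdeg β x := by
  unfold qdeg
  rw [max_le_iff]
  refine ⟨?_, fdeg_nonneg h0 h1⟩
  have := E_nonneg hε0 hε hβ h0 h1
  linarith

lemma qdeg_nonneg (x : ℝ) : 0 ≤ qdeg β ε x := le_max_right _ _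

/-- NUM1: bare edge spend -/
lemma qdeg_pair (hε0 : 0 < ε) (hε : ε < 1/120) (hβ : 1 ≤ (1-ε)*β) {u v : ℝ} (h0u : 0 ≤ u) (h1u : u < β) (h0v : 0 ≤ v) (h1v : v < β)
    (hsum : (1-ε)*β ≤ u + v) : 2 - 4*ε ≤ qdeg β ε u + qdeg β ε v := by
  have hb := beta_gt_one hε0 hε hβ
  have hpu : pdeg β ε u ≤ v := by
    unfold pdeg; rw [max_le_iff]; constructor <;> linarith
  have hpv : pdeg β ε v ≤ u := by
    unfold pdeg; rw [max_le_iff]; constructor <;> linarith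
  have hfu : fdeg β (pdeg β ε u) ≤ fdeg β v := fdeg_mono (pdeg_nonneg _) hpu h1v
  have hfv : fdeg β (pdeg β ε v) ≤ fdeg β u := fdeg_mono (pdeg_nonneg _) hpv h1u
  by_cases hqu : (2 - 4*ε + fdeg β u - fdeg β (pdeg β ε u)) / 2 < 0
  · -- q(u) < 0 : f(P u) > T + f u ; show q v ≥ T
    have key : 2 - 4*ε ≤ (2 - 4*ε + fdeg β v - fdeg β (pdeg β ε v)) / 2 := by
      have : 2 - 4*ε + fdeg β u < fdeg β (pdeg β ε u) := by linarith
      linarith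
    calc (2:ℝ) - 4*ε ≤ (2 - 4*ε + fdeg β v - fdeg β (pdeg β ε v)) / 2 := key
      _ ≤ qdeg β ε v := le_max_left _ _
      _ ≤ qdeg β ε u + qdeg β ε v := by linarith [qdeg_nonneg (β := β) (ε := ε) u]
  · push_neg at hqu
    by_cases hqv : (2 - 4*ε + fdeg β v - fdeg β (pdeg β ε v)) / 2 < 0
    · have key : 2 - 4*ε ≤ (2 - 4*ε + fdeg β u - fdeg β (pdeg β ε u)) / 2 := by
        have : 2 - 4*ε + fdeg β v < fdeg β (pdeg β ε v) := by linarith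
        linarith
      calc (2:ℝ) - 4*ε ≤ (2 - 4*ε + fdeg β u - fdeg β (pdeg β ε u)) / 2 := le_trans key (le_refl _)
        _ ≤ qdeg β ε u := le_max_left _ _
        _ ≤ qdeg β ε u + qdeg β ε v := by linarith [qdeg_nonneg (β := β) (ε := ε) v]
    · push_neg at hqv
      have e1 : (2 - 4*ε + fdeg β u - fdeg β (pdeg β ε u)) / 2 ≤ qdeg β ε u := le_max_left _ _
      have e2 : (2 - 4*ε + fdeg β v - fdeg β (pdeg β ε v)) / 2 ≤ qdeg β ε v := le_max_left _ _
      linarith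

end Numeric

section Numeric2
variable {β ε : ℝ}
set_option maxHeartbeats 2000000

/-- share is nonnegative -/
lemma qdeg_div_le (hε0 : 0 < ε) (hε : ε < 1/120) (hβ : 1 ≤ (1-ε)*β)
    {x c : ℝ} (hc1 : 1 ≤ c) (hx1 : 1 ≤ x) (hxc : x + c ≤ β) :
    qdeg β ε x / x ≤ 1/c := by
  have hb := beta_gt_one hε0 hε hβ
  have h1 : qdeg β ε x ≤ fdeg β x := qdeg_le_fdeg hε0 hε hβ (by linarith) (by linarith)
  have h2 : fdeg β x / x = 1/(β - x) := by
    unfold fdeg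
    rw [div_div, mul_comm, ← div_div, div_self (by linarith : x ≠ 0)]
  calc qdeg β ε x / x ≤ fdeg β x / x := by
        apply div_le_div_of_nonneg_right ?_ ?_ <;> first | exact h1 | linarith
    _ = 1/(β-x) := h2
    _ ≤ 1/c := one_div_le_one_div_of_le (by linarith) (by linarith)

/-- NUM5 -/
lemma fdeg_quarter (hβpos : 0 < β) {x : ℝ} (hx : 1/5*β ≤ x) (hxb : x < β) :
    1/4 ≤ fdeg β x := by
  unfold fdeg
  rw [le_div_iff₀ (by linarith)]
  linarith

/-- NUM3 : light c -/
lemma light_share (hε0 : 0 < ε) (hε : ε < 1/120) (hβ : 1 ≤ (1-ε)*β)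
    {x c : ℝ} (hc1 : 1 ≤ c) (hc : c ≤ 2/5*β) (hx1 : 1 ≤ x) (hxc : x + c ≤ β) :
    qdeg β ε x / x ≤ (79/80) * (1/c) := by
  have hb := beta_gt_one hε0 hε hβ
  have hβpos : (0:ℝ) < β := by linarith
  have hxb : x < β := by linarith
  by_cases hq : (2 - 4*ε + fdeg β x - fdeg β (pdeg β ε x)) / 2 ≤ 0
  · have : qdeg β ε x = 0 := by
      unfold qdeg; exact max_eq_right hq
    rw [this, zero_div]
    positivity
  · push_neg at hq
    have hqval : qdeg β ε x = (2 - 4*ε + fdeg β x - fdeg β (pdeg β ε x)) / 2 := by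
      unfold qdeg; exact max_eq_left (le_of_lt hq)
    by_cases hx59 : x ≤ 59/100*β
    · -- pairgap case
      have h1 : qdeg β ε x / x ≤ 1/(β - x) := by
        have h2 : qdeg β ε x ≤ fdeg β x := qdeg_le_fdeg hε0 hε hβ (by linarith) hxb
        calc qdeg β ε x / x ≤ fdeg β x / x := by
              apply div_le_div_of_nonneg_right ?_ ?_ <;> first | exact h2 | linarith
          _ = 1/(β-x) := by
              unfold fdeg
              rw [div_div, mul_comm, ← div_div, div_self (by linarith : x ≠ 0)]
      have h3 : (1:ℝ)/(β-x) ≤ 1/(41/100*β) := by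
        apply one_div_le_one_div_of_le (by linarith) (by linarith)
      have h4 : (1:ℝ)/(41/100*β) ≤ (79/80)*(1/(2/5*β)) := by
        rw [div_le_iff₀ (by positivity), one_div, mul_comm (79/80 : ℝ), mul_assoc]
        rw [inv_mul_eq_div, div_mul_eq_mul_div, le_div_iff₀ (by positivity)]
        nlinarith
      have h5 : (79/80)*(1/(2/5*β)) ≤ (79/80)*(1/c) := by
        have := one_div_le_one_div_of_le (show (0:ℝ) < c by linarith) hc
        nlinarith
      linarith
    · -- E-share case : x ≥ 0.59 β
      push_neg at hx59
      rw [hqval]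
      rw [div_le_iff₀ (by linarith : (0:ℝ) < x)]
      have hcx : (79/80) * (1/c) ≥ (79/80) * (1/(β - x)) := by
        have := one_div_le_one_div_of_le (show (0:ℝ) < c by linarith) (by linarith : c ≤ β - x)
        nlinarith
      have key : (2 - 4*ε + fdeg β x - fdeg β (pdeg β ε x)) / 2 ≤ (79/80) * (1/(β-x)) * x := by
        have hfx : fdeg β x = x/(β-x) := rfl
        by_cases hxs : (1-ε)*β - x ≤ 0
        · -- x ≥ s₀
          have hp : pdeg β ε x = 0 := max_eq_right hxs
          rw [hp, hfx]
          have hf0 : fdeg β (0:ℝ) = 0 := by unfold fdeg; simp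
          rw [hf0]
          rw [div_le_iff₀ (by norm_num : (0:ℝ) < 2)] at *
          have hbx : β - x ≤ ε*β := by nlinarith
          have hx9 : 9/10*β ≤ x := by nlinarith
          rw [show (79:ℝ)/80 * (1/(β-x)) * x * 2 = (79/40)*(x/(β-x)) by ring]
          have h6 : x/(β-x) = fdeg β x := rfl
          -- (2-4ε) + x/(β−x) ≤ (79/40) x/(β−x)  ⟺ (2−4ε) ≤ (39/40) x/(β−x)
          have h7 : (2:ℝ) ≤ (39/40) * (x/(β-x)) := by
            rw [show (39:ℝ)/40 * (x/(β-x)) = (39/40*x)/(β-x) by ring]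
            rw [le_div_iff₀ (by linarith)]
            nlinarith
          nlinarith [hq]
        · push_neg at hxs
          have hp : pdeg β ε x = (1-ε)*β - x := max_eq_left (le_of_lt hxs)
          rw [hp, hfx]
          have hd2 : (0:ℝ) < β - ((1-ε)*β - x) := by nlinarith
          have hfp : fdeg β ((1-ε)*β - x) = ((1-ε)*β - x)/(ε*β + x) := by
            unfold fdeg; congr 1; ring
          rw [hfp]
          rw [div_le_iff₀ (by norm_num : (0:ℝ) < 2)]
          rw [show (79:ℝ)/80 * (1/(β-x)) * x * 2 = (79/40)*x*(1/(β-x)) by ring]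
          have hεβ : (0:ℝ) < ε*β + x := by nlinarith
          have hbx : (0:ℝ) < β - x := by linarith
          rw [← sub_nonneg]
          have hP : (0:ℝ) ≤ (79/40)*x*(ε*β+x) - ((2-4*ε)*(β-x)*(ε*β+x) + x*(ε*β+x)
              - ((1-ε)*β-x)*(β-x)) := by
            nlinarith [sq_nonneg (x - 59/100*β), mul_nonneg (le_of_lt hε0) (sub_nonneg.2 hx59.le),
              mul_nonneg (le_of_lt hε0) (le_of_lt hxs), mul_pos hε0 (lt_trans one_pos hb),
              sq_nonneg ε, mul_pos hε0 hε0, mul_nonneg (mul_nonneg (le_of_lt hε0) (le_of_lt hε0)) (le_of_lt hbx),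
              mul_nonneg (mul_nonneg (le_of_lt hε0) (le_of_lt hε0)) (le_of_lt hεβ)]
          have hrw : (79/40)*x*(1/(β-x)) - (2 - 4*ε + x / (β - x) - ((1-ε)*β - x) / (ε*β + x))
              = ((79/40)*x*(ε*β+x) - ((2-4*ε)*(β-x)*(ε*β+x) + x*(ε*β+x)
              - ((1-ε)*β-x)*(β-x))) / ((β-x)*(ε*β+x)) := by
            field_simp
          rw [hrw]
          exact div_nonneg hP (by positivity)
      calc (2 - 4*ε + fdeg β x - fdeg β (pdeg β ε x)) / 2 ≤ (79/80) * (1/(β-x)) * x := key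
        _ ≤ (79/80) * (1/c) * x := by nlinarith

/-- NUM4a : E ≥ 1/10 for x ≤ 0.4 β -/
lemma E_ge_tenth (hε0 : 0 < ε) (hε : ε < 1/120) (hβ : 1 ≤ (1-ε)*β)
    {x : ℝ} (h0 : 0 ≤ x) (hx : x ≤ 2/5*β) :
    2 - 4*ε + 1/10 ≤ fdeg β x + fdeg β (pdeg β ε x) := by
  have hb := beta_gt_one hε0 hε hβ
  have hβpos : (0:ℝ) < β := by linarith
  have hxs : (0:ℝ) < (1-ε)*β - x := by nlinarith
  have hp : pdeg β ε x = (1-ε)*β - x := max_eq_left (le_of_lt hxs)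
  rw [hp]
  have hbx : (0:ℝ) < β - x := by nlinarith
  have hεβ : (0:ℝ) < ε*β + x := by nlinarith
  have hfx : fdeg β x = x/(β-x) := rfl
  have hfp : fdeg β ((1-ε)*β - x) = ((1-ε)*β - x)/(ε*β + x) := by
    unfold fdeg; congr 1; ring
  rw [hfx, hfp, ← sub_nonneg]
  have ht : (0:ℝ) ≤ 2/5*β - x := by linarith
  have he120 : (0:ℝ) ≤ 1/120 - ε := by linarith
  have hP : (0:ℝ) ≤ x*(ε*β+x) + ((1-ε)*β-x)*(β-x) - (2 - 4*ε + 1/10)*((β-x)*(ε*β+x)) := by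
    nlinarith [sq_nonneg (2/5*β - x), mul_nonneg he120 (sq_nonneg (2/5*β - x)),
      mul_nonneg ht (le_of_lt hβpos), mul_nonneg he120 (mul_nonneg ht (le_of_lt hβpos)),
      sq_nonneg β, mul_nonneg he120 (sq_nonneg β),
      mul_nonneg (mul_nonneg (le_of_lt hε0) (le_of_lt hε0)) (mul_nonneg (le_of_lt hβpos) (le_of_lt hbx))]
  have hrw : x/(β-x) + ((1-ε)*β - x)/(ε*β + x) - (2 - 4*ε + 1/10)
      = (x*(ε*β+x) + ((1-ε)*β-x)*(β-x) - (2 - 4*ε + 1/10)*((β-x)*(ε*β+x))) / ((β-x)*(ε*β+x)) := by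
    field_simp
  rw [hrw]
  exact div_nonneg hP (by positivity)

/-- NUM4 : heavy c -/
lemma heavy_share (hε0 : 0 < ε) (hε : ε < 1/120) (hβ : 1 ≤ (1-ε)*β)
    {x c : ℝ} (hc1 : 1 ≤ c) (hc : 3/5*β ≤ c) (hx1 : 1 ≤ x) (hxc : x + c ≤ β) :
    1/(80*c) ≤ 1/c - qdeg β ε x / x := by
  have hb := beta_gt_one hε0 hε hβ
  have hβpos : (0:ℝ) < β := by linarith
  have hcpos : (0:ℝ) < c := by linarith
  have hxb : x < β := by linarith
  have hx4 : x ≤ 2/5*β := by linarith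
  have hstep : qdeg β ε x / x ≤ 1/c - 1/(8*β) → 1/(80*c) ≤ 1/c - qdeg β ε x / x := by
    intro h
    have h8 : 1/(80*c) ≤ 1/(8*β) := by
      rw [div_le_div_iff₀ (by positivity) (by positivity)]
      nlinarith
    linarith
  apply hstep
  by_cases hq : (2 - 4*ε + fdeg β x - fdeg β (pdeg β ε x)) / 2 ≤ 0
  · have hz : qdeg β ε x = 0 := max_eq_right hq
    rw [hz, zero_div]
    rw [le_sub_iff_add_le, zero_add, div_le_div_iff₀ (by positivity) hcpos]
    nlinarith
  · push_neg at hq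
    have hqval : qdeg β ε x = (2 - 4*ε + fdeg β x - fdeg β (pdeg β ε x)) / 2 := max_eq_left (le_of_lt hq)
    -- q/x = 1/(β−x) − E/(2x) where E = f x + f (P x) − (2−4ε)
    have hbx : (0:ℝ) < β - x := by linarith
    have hE : 2 - 4*ε + 1/10 ≤ fdeg β x + fdeg β (pdeg β ε x) :=
      E_ge_tenth hε0 hε hβ (by linarith) hx4
    have hq2 : qdeg β ε x ≤ fdeg β x - 1/20 := by
      rw [hqval]; linarith
    have hfxd : fdeg β x / x = 1/(β-x) := by
      unfold fdeg
      rw [div_div, mul_comm, ← div_div, div_self (by linarith : x ≠ 0)]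
    have h3 : qdeg β ε x / x ≤ 1/(β-x) - 1/(20*x) := by
      have := div_le_div_of_nonneg_right (c := x) hq2 (by linarith)
      rw [sub_div, hfxd] at this
      rw [show (1:ℝ)/20/x = 1/(20*x) by rw [div_div]] at this
      exact this
    have h4 : (1:ℝ)/(β-x) ≤ 1/c := one_div_le_one_div_of_le hcpos (by linarith)
    have h5 : (1:ℝ)/(8*β) ≤ 1/(20*x) := by
      rw [div_le_div_iff₀ (by positivity) (by positivity)]
      nlinarith
    linarith


lemma qdeg_zero (hε0 : 0 < ε) (hε : ε < 1/120) (hβ : 1 ≤ (1-ε)*β) :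
    qdeg β ε 0 = 0 := by
  have hb := beta_gt_one hε0 hε hβ
  have h1 : pdeg β ε 0 = (1-ε)*β := by
    unfold pdeg; rw [sub_zero]; exact max_eq_left (by nlinarith)
  have h2 : fdeg β ((1-ε)*β) = (1-ε)/ε := by
    unfold fdeg
    rw [show β - (1-ε)*β = ε*β by ring]
    rw [div_eq_div_iff (by nlinarith) (ne_of_gt hε0)]
    ring
  have h3 : fdeg β (0:ℝ) = 0 := by unfold fdeg; simp
  have h4 : (2:ℝ) - 4*ε ≤ (1-ε)/ε := by
    rw [le_div_iff₀ hε0]; nlinarith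
  unfold qdeg
  rw [h1, h3, h2]
  apply max_eq_right
  linarith

end Numeric2

set_option maxHeartbeats 4000000 in
/-- Property (P1) of the characterization of tight EDCS instances (bipartite graphs):
if `μ(H) ≤ (2/3 + δ)·μ(G)`, then `μ(H') ≥ (2/3 − 120√δ)·μ(G)`. -/
theorem EDCS_tight_P1 [Fintype V] (G H : SimpleGraph V) (ε δ β : ℝ)
    (hε0 : 0 < ε) (hε : ε < 1 / 120) (hδl : 2 * ε < δ) (hδu : δ < 1 / 60)
    (hbip : G.Colorable 2)
    (hβ1 : 1 ≤ (1 - ε) * β) (hβ2 : (1 - ε) * β < β)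
    (hEDCS : IsEDCS G H β ((1 - ε) * β))
    (Vmid Vlow : Set V)
    (hVmid : Vmid = {v | 0.4 * β ≤ (deg H v : ℝ) ∧ (deg H v : ℝ) ≤ 0.6 * β})
    (hVlow : Vlow = {v | 0 ≤ (deg H v : ℝ) ∧ (deg H v : ℝ) ≤ 0.2 * β})
    (H' : SimpleGraph V) (hH' : H' = between H Vlow Vmid)
    (hmu : (nu H : ℝ) ≤ (2 / 3 + δ) * nu G) :
    (2 / 3 - 120 * Real.sqrt δ) * nu G ≤ (nu H' : ℝ) := by
  classical
  obtain ⟨hle, hup, hlow⟩ := hEDCS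
  have hb1 : (1:ℝ) < β := beta_gt_one hε0 hε hβ1
  have hβpos : (0:ℝ) < β := by linarith
  -- degree basics
  have hdeg1 : ∀ u v : V, H.Adj u v → 1 ≤ deg H u := by
    intro u v h
    rw [deg_eq_card]
    rw [Nat.succ_le_iff, Finset.card_pos]
    exact ⟨v, (H.mem_neighborFinset u v).2 h⟩
  have hdeg1R : ∀ u v : V, H.Adj u v → (1:ℝ) ≤ (deg H u : ℝ) := by
    intro u v h; exact_mod_cast hdeg1 u v h
  have hedge_sum : ∀ u v : V, H.Adj u v → (deg H u : ℝ) + (deg H v : ℝ) ≤ β := by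
    intro u v h; have := hup u v h; push_cast at this ⊢; linarith
  have hdub : ∀ v : V, (deg H v : ℝ) < β := by
    intro v
    by_cases h0 : deg H v = 0
    · rw [h0]; exact_mod_cast hβpos
    · have hpos : 0 < (H.neighborFinset v).card := by
        rw [← deg_eq_card]; omega
      rw [Finset.card_pos] at hpos
      obtain ⟨u, hu⟩ := hpos
      have hadj : H.Adj v u := (H.mem_neighborFinset v u).1 hu
      have h1 := hedge_sum v u hadj
      have h2 := hdeg1R u v hadj.symm
      linarith
  -- the cover
  obtain ⟨C0, hC0cov, hC0card⟩ := exists_koenig_cover hle hbip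
  set C : Finset V := C0.filter (fun c => 0 < deg H c) with hCdef
  have hCcov : ∀ u v : V, H.Adj u v → u ∈ C ∨ v ∈ C := by
    intro u v h
    rcases hC0cov u v h with h1 | h1
    · exact Or.inl (Finset.mem_filter.2 ⟨h1, by have := hdeg1 u v h; omega⟩)
    · exact Or.inr (Finset.mem_filter.2 ⟨h1, by have := hdeg1 v u h.symm; omega⟩)
  have hCdpos : ∀ c ∈ C, 1 ≤ deg H c := by
    intro c hc; have := (Finset.mem_filter.1 hc).2; omega
  have hCdposR : ∀ c ∈ C, (1:ℝ) ≤ (deg H c : ℝ) := by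
    intro c hc; exact_mod_cast hCdpos c hc
  have hCcard : C.card ≤ nu H := le_trans (Finset.card_filter_le _ _) hC0card
  -- max matching of G
  obtain ⟨MG, hMGmatch, hMGcard⟩ := exists_nu_matching G
  have hMGfinite : MG.Finite := Set.toFinite _
  set MGfin : Finset (Sym2 V) := hMGfinite.toFinset with hMGfindef
  have hMGfincard : MGfin.card = nu G := by
    rw [← hMGcard, hMGfindef, ← Set.ncard_eq_toFinset_card]
  have hmemMG : ∀ e, e ∈ MGfin ↔ e ∈ MG := fun e => Set.Finite.mem_toFinset _
  have hends : ∀ e ∈ MGfin, ∃ u v : V, e = s(u,v) ∧ G.Adj u v := by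
    intro e he
    have hE : e ∈ G.edgeSet := hMGmatch.1 ((hmemMG e).1 he)
    induction e using Sym2.ind with
    | _ u v => exact ⟨u, v, rfl, hE⟩
  have hMGpw : ∀ e ∈ MGfin, ∀ e' ∈ MGfin, e ≠ e' → ∀ v : V, v ∈ e → v ∉ e' := by
    intro e he e' he' hne
    exact hMGmatch.2 ((hmemMG e).1 he) ((hmemMG e').1 he') hne
  -- classification
  set kC : Sym2 V → ℕ := fun e => (C.filter (· ∈ e)).card with hkCdef
  set bareF : Finset (Sym2 V) := MGfin.filter (fun e => kC e = 0) with hbareFdef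
  set onceF : Finset (Sym2 V) := MGfin.filter (fun e => kC e = 1) with honceFdef
  set twiceF : Finset (Sym2 V) := MGfin.filter (fun e => 2 ≤ kC e) with htwiceFdef
  set X : Finset V := bareF.biUnion (fun e => Finset.univ.filter (· ∈ e)) with hXdef
  have hmemX : ∀ v : V, v ∈ X ↔ ∃ e ∈ bareF, v ∈ e := by
    intro v
    simp [hXdef, Finset.mem_biUnion]
  have hXnC : ∀ x ∈ X, x ∉ C := by
    intro x hx hxC
    obtain ⟨e, he, hxe⟩ := (hmemX x).1 hx
    have h0 : kC e = 0 := (Finset.mem_filter.1 he).2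
    have : x ∈ C.filter (· ∈ e) := Finset.mem_filter.2 ⟨hxC, hxe⟩
    rw [hkCdef] at h0
    simp only [Finset.card_eq_zero] at h0
    rw [h0] at this
    exact absurd this (Finset.notMem_empty x)
  -- the nonneg share function
  set q : V → ℝ := fun v => qdeg β ε (deg H v) with hqdef
  set w : V → V → ℝ := fun c v => 1/(deg H c : ℝ) - (if v ∈ X then q v / (deg H v : ℝ) else 0)
    with hwdef
  -- per-edge nonnegativity and bad-c bounds
  have hshare_nonneg : ∀ c ∈ C, ∀ v ∈ H.neighborFinset c, 0 ≤ w c v := by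
    intro c hc v hv
    have hadj : H.Adj c v := (H.mem_neighborFinset c v).1 hv
    have hc1 := hCdposR c hc
    by_cases hvX : v ∈ X
    · simp only [hwdef, hvX, if_true, hqdef]
      have h1 : qdeg β ε (deg H v) / (deg H v : ℝ) ≤ 1/(deg H c : ℝ) :=
        qdeg_div_le hε0 hε hβ1 hc1 (hdeg1R v c hadj.symm)
          (by have := hedge_sum c v hadj; linarith)
      linarith
    · simp only [hwdef, hvX, if_false, sub_zero]
      positivity
  have hshare_bad : ∀ c ∈ C, ((deg H c : ℝ) < 2/5*β ∨ 3/5*β < (deg H c : ℝ)) →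
      ∀ v ∈ H.neighborFinset c, 1/(80*(deg H c : ℝ)) ≤ w c v := by
    intro c hc hbad v hv
    have hadj : H.Adj c v := (H.mem_neighborFinset c v).1 hv
    have hc1 := hCdposR c hc
    have hv1 := hdeg1R v c hadj.symm
    have hsum := hedge_sum c v hadj
    have hdc0 : (0:ℝ) < (deg H c : ℝ) := by linarith
    by_cases hvX : v ∈ X
    · rcases hbad with hlight | hheavy
      · have h1 : qdeg β ε (deg H v) / (deg H v : ℝ) ≤ (79/80)*(1/(deg H c : ℝ)) :=
          light_share hε0 hε hβ1 hc1 (le_of_lt hlight) hv1 (by linarith)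
        simp only [hwdef, hvX, if_true, hqdef]
        have h2 : 1/(80*(deg H c : ℝ)) = (1/80)*(1/(deg H c : ℝ)) := by
          rw [one_div, mul_inv, ← one_div]; ring
        rw [h2]
        have h3 : (0:ℝ) < 1/(deg H c : ℝ) := by positivity
        linarith
      · have h1 := heavy_share hε0 hε hβ1 hc1 (le_of_lt hheavy) hv1 (by linarith)
        simp only [hwdef, hvX, if_true, hqdef]
        exact h1
    · simp only [hwdef, hvX, if_false, sub_zero]
      rw [div_le_div_iff₀ (by positivity) hdc0]
      nlinarith
  -- master identity pieces
  have hinner_one : ∀ c ∈ C, ∑ v ∈ H.neighborFinset c, (1/(deg H c : ℝ)) = 1 := by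
    intro c hc
    rw [Finset.sum_const, nsmul_eq_mul, ← deg_eq_card, mul_one_div, div_self]
    have := hCdposR c hc
    linarith
  have hswap : ∀ ψ : V → V → ℝ, (∑ c ∈ C, ∑ v ∈ H.neighborFinset c, ψ c v)
      = ∑ v : V, ∑ c ∈ C.filter (fun c => H.Adj v c), ψ c v := by
    intro ψ
    have h1 : ∀ c : V, (∑ v ∈ H.neighborFinset c, ψ c v)
        = ∑ v : V, if H.Adj c v then ψ c v else 0 := by
      intro c
      rw [SimpleGraph.neighborFinset_eq_filter, Finset.sum_filter]
    calc (∑ c ∈ C, ∑ v ∈ H.neighborFinset c, ψ c v)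
        = ∑ c ∈ C, ∑ v : V, if H.Adj c v then ψ c v else 0 :=
          Finset.sum_congr rfl (fun c _ => h1 c)
      _ = ∑ v : V, ∑ c ∈ C, if H.Adj c v then ψ c v else 0 := Finset.sum_comm
      _ = ∑ v : V, ∑ c ∈ C.filter (fun c => H.Adj v c), ψ c v := by
          refine Finset.sum_congr rfl (fun v _ => ?_)
          conv_rhs => rw [Finset.sum_filter]
          refine Finset.sum_congr rfl (fun c _ => ?_)
          by_cases h : H.Adj v c
          · simp [h, h.symm]
          · have h' : ¬ H.Adj c v := fun hh => h hh.symm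
            simp [h, h']
  have hnbrC : ∀ v : V, v ∉ C → C.filter (fun c => H.Adj v c) = H.neighborFinset v := by
    intro v hv
    ext c
    simp only [Finset.mem_filter, SimpleGraph.mem_neighborFinset]
    constructor
    · rintro ⟨-, h⟩; exact h
    · intro h
      refine ⟨?_, h⟩
      rcases hCcov v c h with h1 | h1
      · exact absurd h1 hv
      · exact h1
  have hXq : (∑ c ∈ C, ∑ v ∈ H.neighborFinset c, (if v ∈ X then q v / (deg H v : ℝ) else 0))
      = ∑ x ∈ X, q x := by
    rw [hswap (fun c v => if v ∈ X then q v / (deg H v : ℝ) else 0)]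
    have h1 : ∀ v : V, (∑ c ∈ C.filter (fun c => H.Adj v c),
        (if v ∈ X then q v / (deg H v : ℝ) else 0)) = if v ∈ X then q v else 0 := by
      intro v
      by_cases hvX : v ∈ X
      · simp only [hvX, if_true]
        rw [hnbrC v (hXnC v hvX), Finset.sum_const, nsmul_eq_mul, ← deg_eq_card]
        by_cases h0 : deg H v = 0
        · rw [hqdef]
          simp only [h0]
          rw [Nat.cast_zero, qdeg_zero hε0 hε hβ1]
          simp
        · rw [mul_div_cancel₀]
          exact_mod_cast h0
      · simp [hvX]
    rw [Finset.sum_congr rfl (fun v _ => h1 v)]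
    rw [Finset.sum_ite_mem]
    congr 1
    exact Finset.univ_inter X
  have hXq_lb : (2-4*ε) * (bareF.card : ℝ) ≤ ∑ x ∈ X, q x := by
    have hdisj : Set.PairwiseDisjoint (↑bareF : Set (Sym2 V))
        (fun e => Finset.univ.filter (· ∈ e)) := by
      intro e he e' he' hne
      simp only [Function.onFun]
      rw [Finset.disjoint_left]
      intro a ha ha'
      have h1 := hMGpw e (Finset.mem_of_mem_filter e (Finset.mem_coe.1 he))
        e' (Finset.mem_of_mem_filter e' (Finset.mem_coe.1 he')) hne a
        (Finset.mem_filter.1 ha).2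
      exact h1 (Finset.mem_filter.1 ha').2
    rw [hXdef, Finset.sum_biUnion hdisj]
    have hper : ∀ e ∈ bareF, (2-4*ε) ≤ ∑ v ∈ Finset.univ.filter (· ∈ e), q v := by
      intro e he
      have heM : e ∈ MGfin := Finset.mem_of_mem_filter e he
      obtain ⟨u, v, rfl, hadj⟩ := hends e heM
      have h0 : kC s(u,v) = 0 := (Finset.mem_filter.1 he).2
      have hnC : u ∉ C ∧ v ∉ C := by
        constructor <;> intro hmem
        · have : u ∈ C.filter (· ∈ s(u,v)) :=
            Finset.mem_filter.2 ⟨hmem, Sym2.mem_mk_left u v⟩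
          rw [hkCdef] at h0
          simp only [Finset.card_eq_zero] at h0
          rw [h0] at this
          exact absurd this (Finset.notMem_empty u)
        · have : v ∈ C.filter (· ∈ s(u,v)) :=
            Finset.mem_filter.2 ⟨hmem, Sym2.mem_mk_right u v⟩
          rw [hkCdef] at h0
          simp only [Finset.card_eq_zero] at h0
          rw [h0] at this
          exact absurd this (Finset.notMem_empty v)
      have hnH : ¬ H.Adj u v := by
        intro hH
        rcases hCcov u v hH with h1 | h1
        · exact hnC.1 h1
        · exact hnC.2 h1
      have hlowsum := hlow u v hadj hnH
      have hset : Finset.univ.filter (· ∈ s(u,v)) = {u, v} := by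
        ext z
        simp [Sym2.mem_iff]
      rw [hset, Finset.sum_pair hadj.ne]
      have := qdeg_pair hε0 hε hβ1 (Nat.cast_nonneg (deg H u)) (hdub u)
        (Nat.cast_nonneg (deg H v)) (hdub v) (by push_cast at hlowsum ⊢; linarith)
      simp only [hqdef]
      exact this
    calc (2-4*ε) * (bareF.card : ℝ) = ∑ _e ∈ bareF, (2-4*ε) := by
          rw [Finset.sum_const, nsmul_eq_mul]; ring
      _ ≤ _ := Finset.sum_le_sum hper
  have hmaster : (∑ c ∈ C, ∑ v ∈ H.neighborFinset c, w c v)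
      = (C.card : ℝ) - ∑ x ∈ X, q x := by
    have h1 : (∑ c ∈ C, ∑ v ∈ H.neighborFinset c, w c v)
        = (∑ c ∈ C, ∑ v ∈ H.neighborFinset c, (1/(deg H c : ℝ)))
          - ∑ c ∈ C, ∑ v ∈ H.neighborFinset c, (if v ∈ X then q v / (deg H v : ℝ) else 0) := by
      rw [← Finset.sum_sub_distrib]
      refine Finset.sum_congr rfl (fun c _ => ?_)
      rw [← Finset.sum_sub_distrib]
    rw [h1, hXq]
    congr 1
    rw [Finset.sum_congr rfl hinner_one, Finset.sum_const, nsmul_eq_mul, mul_one]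
  -- consequences
  set badC : Finset V := C.filter (fun c => (deg H c : ℝ) < 2/5*β ∨ 3/5*β < (deg H c : ℝ))
    with hbadCdef
  set W1 : Finset V := Finset.univ.filter
      (fun v => v ∉ C ∧ v ∉ X ∧ 1/5*β < (deg H v : ℝ)) with hW1def
  have hshare_total_nonneg : 0 ≤ ∑ c ∈ C, ∑ v ∈ H.neighborFinset c, w c v :=
    Finset.sum_nonneg (fun c hc => Finset.sum_nonneg (fun v hv => hshare_nonneg c hc v hv))
  have hA1 : (2-4*ε) * (bareF.card : ℝ) ≤ (C.card : ℝ) := by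
    have := hmaster
    linarith [hXq_lb, hshare_total_nonneg, hmaster ▸ hshare_total_nonneg]
  have hA2 : (badC.card : ℝ) * (1/80) ≤ (C.card : ℝ) - (2-4*ε) * (bareF.card : ℝ) := by
    have hsub : ∑ c ∈ badC, ∑ v ∈ H.neighborFinset c, w c v
        ≤ ∑ c ∈ C, ∑ v ∈ H.neighborFinset c, w c v := by
      apply Finset.sum_le_sum_of_subset_of_nonneg (Finset.filter_subset _ _)
      intro c hc _
      exact Finset.sum_nonneg (fun v hv => hshare_nonneg c hc v hv)
    have hper : ∀ c ∈ badC, (1:ℝ)/80 ≤ ∑ v ∈ H.neighborFinset c, w c v := by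
      intro c hc
      have hcC : c ∈ C := Finset.mem_of_mem_filter c hc
      have hbad := (Finset.mem_filter.1 hc).2
      have hdc1 := hCdposR c hcC
      have hdc0 : (0:ℝ) < (deg H c : ℝ) := by linarith
      calc (1:ℝ)/80 = (deg H c : ℝ) * (1/(80*(deg H c : ℝ))) := by
            field_simp
        _ = ∑ _v ∈ H.neighborFinset c, (1/(80*(deg H c : ℝ))) := by
            rw [Finset.sum_const, nsmul_eq_mul, ← deg_eq_card]
        _ ≤ ∑ v ∈ H.neighborFinset c, w c v :=
            Finset.sum_le_sum (fun v hv => hshare_bad c hcC hbad v hv)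
    have hlb : (badC.card : ℝ) * (1/80) ≤ ∑ c ∈ badC, ∑ v ∈ H.neighborFinset c, w c v := by
      calc (badC.card : ℝ) * (1/80) = ∑ _c ∈ badC, (1:ℝ)/80 := by
            rw [Finset.sum_const, nsmul_eq_mul]
        _ ≤ _ := Finset.sum_le_sum hper
    have := hmaster
    linarith [hXq_lb]
  have hA3 : (W1.card : ℝ) * (1/4) ≤ (C.card : ℝ) - (2-4*ε) * (bareF.card : ℝ) := by
    have hsub : (∑ c ∈ C, ∑ v ∈ H.neighborFinset c,
        (if v ∈ W1 then 1/(deg H c : ℝ) else 0))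
        ≤ ∑ c ∈ C, ∑ v ∈ H.neighborFinset c, w c v := by
      refine Finset.sum_le_sum (fun c hc => Finset.sum_le_sum (fun v hv => ?_))
      by_cases hvW : v ∈ W1
      · simp only [hvW, if_true]
        have hvX : v ∉ X := ((Finset.mem_filter.1 hvW).2).2.1
        simp only [hwdef, hvX, if_false, sub_zero]
        exact le_refl _
      · simp only [hvW, if_false]
        exact hshare_nonneg c hc v hv
    have hswapped : (∑ c ∈ C, ∑ v ∈ H.neighborFinset c,
        (if v ∈ W1 then 1/(deg H c : ℝ) else 0))
        = ∑ v : V, ∑ c ∈ C.filter (fun c => H.Adj v c),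
          (if v ∈ W1 then 1/(deg H c : ℝ) else 0) :=
      hswap (fun c v => if v ∈ W1 then 1/(deg H c : ℝ) else 0)
    have hper : ∀ v : V, (if v ∈ W1 then (1:ℝ)/4 else 0)
        ≤ ∑ c ∈ C.filter (fun c => H.Adj v c), (if v ∈ W1 then 1/(deg H c : ℝ) else 0) := by
      intro v
      by_cases hvW : v ∈ W1
      · simp only [hvW, if_true]
        obtain ⟨hvC, hvX, hvd⟩ := (Finset.mem_filter.1 hvW).2
        rw [hnbrC v hvC]
        have hdvb := hdub v
        have hperc : ∀ c ∈ H.neighborFinset v, 1/(β - (deg H v : ℝ)) ≤ 1/(deg H c : ℝ) := by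
          intro c hcv
          have hadj : H.Adj v c := (H.mem_neighborFinset v c).1 hcv
          have h1 := hedge_sum v c hadj
          have h2 := hdeg1R c v hadj.symm
          apply one_div_le_one_div_of_le (by linarith)
          linarith
        calc (1:ℝ)/4 ≤ fdeg β (deg H v) := by
              apply fdeg_quarter hβpos (by linarith) hdvb
          _ = (deg H v : ℝ) * (1/(β - (deg H v : ℝ))) := by
              unfold fdeg; rw [mul_one_div]
          _ = ∑ _c ∈ H.neighborFinset v, (1/(β - (deg H v : ℝ))) := by
              rw [Finset.sum_const, nsmul_eq_mul, ← deg_eq_card]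
          _ ≤ _ := Finset.sum_le_sum hperc
      · simp [hvW]
    have hlb : (W1.card : ℝ) * (1/4) ≤ ∑ v : V, (if v ∈ W1 then (1:ℝ)/4 else 0) := by
      rw [Finset.sum_ite_mem, Finset.univ_inter, Finset.sum_const, nsmul_eq_mul]
    have hlb2 := Finset.sum_le_sum (fun v (_ : v ∈ Finset.univ) => hper v)
    have := hmaster
    linarith [hXq_lb]
  have hA4N : onceF.card + 2*twiceF.card ≤ C.card := by
    have h1 : (∑ e ∈ MGfin, kC e) = ∑ c ∈ C, (MGfin.filter (fun e => c ∈ e)).card := by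
      simp only [hkCdef]
      rw [show (∑ e ∈ MGfin, (C.filter (· ∈ e)).card)
          = ∑ e ∈ MGfin, ∑ c ∈ C, (if c ∈ e then 1 else 0) from
        Finset.sum_congr rfl (fun e _ => Finset.card_filter _ _)]
      rw [Finset.sum_comm]
      refine Finset.sum_congr rfl (fun c _ => ?_)
      rw [Finset.card_filter]
    have h2 : ∀ c ∈ C, (MGfin.filter (fun e => c ∈ e)).card ≤ 1 := by
      intro c _
      rw [Finset.card_le_one]
      intro e he e' he'
      by_contra hne
      exact hMGpw e (Finset.mem_of_mem_filter e he) e' (Finset.mem_of_mem_filter e' he') hne c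
        (Finset.mem_filter.1 he).2 (Finset.mem_filter.1 he').2
    have h3 : (∑ e ∈ MGfin, kC e) ≤ C.card := by
      rw [h1]
      calc ∑ c ∈ C, (MGfin.filter (fun e => c ∈ e)).card ≤ ∑ _c ∈ C, 1 :=
            Finset.sum_le_sum h2
        _ = C.card := by simp
    have h4 : onceF.card + 2*twiceF.card ≤ ∑ e ∈ MGfin, kC e := by
      have hdisj : Disjoint onceF twiceF := by
        rw [Finset.disjoint_left]
        intro e he he'
        have := (Finset.mem_filter.1 he).2
        have := (Finset.mem_filter.1 he').2
        omega
      have hsub : onceF ∪ twiceF ⊆ MGfin :=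
        Finset.union_subset (Finset.filter_subset _ _) (Finset.filter_subset _ _)
      calc onceF.card + 2*twiceF.card
          = (∑ e ∈ onceF, kC e) + ∑ e ∈ twiceF, 2 := by
            rw [show (∑ e ∈ onceF, kC e) = ∑ _e ∈ onceF, 1 from
              Finset.sum_congr rfl (fun e he => (Finset.mem_filter.1 he).2)]
            simp [mul_comm]
        _ ≤ (∑ e ∈ onceF, kC e) + ∑ e ∈ twiceF, kC e := by
            have := Finset.sum_le_sum (fun e (he : e ∈ twiceF) => (Finset.mem_filter.1 he).2)
            omega
        _ = ∑ e ∈ onceF ∪ twiceF, kC e := (Finset.sum_union hdisj).symm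
        _ ≤ ∑ e ∈ MGfin, kC e := Finset.sum_le_sum_of_subset hsub
    omega
  have hA4 : (onceF.card : ℝ) + 2*(twiceF.card : ℝ) ≤ (C.card : ℝ) := by
    exact_mod_cast hA4N
  have hA5N : nu G = bareF.card + onceF.card + twiceF.card := by
    have t1 := Finset.card_filter_add_card_filter_not
      (s := MGfin) (p := fun e => kC e = 0)
    have t2 := Finset.card_filter_add_card_filter_not
      (s := MGfin.filter (fun e => ¬ kC e = 0)) (p := fun e => kC e = 1)
    have e1 : (MGfin.filter (fun e => ¬ kC e = 0)).filter (fun e => kC e = 1) = onceF := by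
      rw [Finset.filter_filter]
      apply Finset.filter_congr
      intro e _
      constructor
      · rintro ⟨-, h⟩; exact h
      · intro h; exact ⟨by omega, h⟩
    have e2 : (MGfin.filter (fun e => ¬ kC e = 0)).filter (fun e => ¬ kC e = 1) = twiceF := by
      rw [Finset.filter_filter]
      apply Finset.filter_congr
      intro e _
      constructor
      · rintro ⟨h1, h2⟩; omega
      · intro h; omega
    rw [e1, e2] at t2
    rw [← hbareFdef] at t1
    rw [← hMGfincard]
    omega
  have hA5 : (nu G : ℝ) = (bareF.card : ℝ) + (onceF.card : ℝ) + (twiceF.card : ℝ) := by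
    exact_mod_cast hA5N
  -- good edges
  set goodP : Sym2 V → Prop := fun e => ∃ u v : V, e = s(u,v) ∧ u ∈ C ∧ v ∉ C ∧
      (2/5*β ≤ (deg H u : ℝ)) ∧ ((deg H u : ℝ) ≤ 3/5*β) ∧ ((deg H v : ℝ) ≤ 1/5*β)
    with hgoodPdef
  set goodF : Finset (Sym2 V) := onceF.filter goodP with hgoodFdef
  have honce_dec : ∀ e ∈ onceF, ∃ p : V × V, e = s(p.1, p.2) ∧ p.1 ∈ C ∧ p.2 ∉ C := by
    intro e he
    have heM : e ∈ MGfin := Finset.mem_of_mem_filter e he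
    have h1 : kC e = 1 := (Finset.mem_filter.1 he).2
    obtain ⟨u, v, rfl, hadj⟩ := hends e heM
    by_cases huC : u ∈ C <;> by_cases hvC : v ∈ C
    · exfalso
      have hsub : ({u, v} : Finset V) ⊆ C.filter (· ∈ s(u,v)) := by
        intro z hz
        rcases Finset.mem_insert.1 hz with hz1 | hz1
        · rw [hz1]
          exact Finset.mem_filter.2 ⟨huC, Sym2.mem_mk_left u v⟩
        · rw [Finset.mem_singleton] at hz1
          rw [hz1]
          exact Finset.mem_filter.2 ⟨hvC, Sym2.mem_mk_right u v⟩
      have hcard : 2 ≤ kC s(u,v) := by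
        rw [hkCdef]
        calc 2 = ({u, v} : Finset V).card := by
              rw [Finset.card_insert_of_notMem (by simpa using hadj.ne), Finset.card_singleton]
          _ ≤ _ := Finset.card_le_card hsub
      omega
    · exact ⟨(u, v), rfl, huC, hvC⟩
    · exact ⟨(v, u), Sym2.eq_swap, hvC, huC⟩
    · exfalso
      have hempty : C.filter (· ∈ s(u,v)) = ∅ := by
        rw [Finset.filter_eq_empty_iff]
        intro c hc hce
        rcases Sym2.mem_iff.1 hce with rfl | rfl
        · exact huC hc
        · exact hvC hc
      simp only [hkCdef] at h1
      rw [hempty] at h1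
      simp at h1
  have hA6 : (onceF.card : ℝ) ≤ (goodF.card : ℝ) + (badC.card : ℝ) + (W1.card : ℝ) := by
    set badOnceF : Finset (Sym2 V) := onceF.filter (fun e => ¬ goodP e) with hbadOnceFdef
    have hsplit : onceF.card = goodF.card + badOnceF.card := by
      rw [hgoodFdef, hbadOnceFdef]
      exact (Finset.card_filter_add_card_filter_not (p := goodP)).symm
    have hbadOnce : badOnceF.card ≤ badC.card + W1.card := by
      rcases badOnceF.eq_empty_or_nonempty with hbe | ⟨e0, he0⟩
      · rw [hbe]; simp
      · have hV : Nonempty V := by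
          obtain ⟨p, _, _, _⟩ := honce_dec e0 (Finset.mem_of_mem_filter e0 he0)
          exact ⟨p.1⟩
        set pick : Sym2 V → V × V := fun e =>
          if h : ∃ p : V × V, e = s(p.1, p.2) ∧ p.1 ∈ C ∧ p.2 ∉ C then h.choose
          else (Classical.arbitrary V, Classical.arbitrary V) with hpickdef
        have hpick : ∀ e ∈ onceF, e = s((pick e).1, (pick e).2) ∧ (pick e).1 ∈ C ∧
            (pick e).2 ∉ C := by
          intro e he
          have h := honce_dec e he
          rw [hpickdef]
          simp only [h, dif_pos]
          exact h.choose_spec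
        set Fmap : Sym2 V → V := fun e =>
          if (2/5*β ≤ (deg H (pick e).1 : ℝ) ∧ (deg H (pick e).1 : ℝ) ≤ 3/5*β)
          then (pick e).2 else (pick e).1 with hFmapdef
        have hFmem : ∀ e ∈ onceF, Fmap e ∈ e := by
          intro e he
          obtain ⟨hrep, -, -⟩ := hpick e he
          by_cases hmid : (2/5*β ≤ (deg H (pick e).1 : ℝ) ∧ (deg H (pick e).1 : ℝ) ≤ 3/5*β)
          · have hFe : Fmap e = (pick e).2 := by
              simp only [hFmapdef]
              rw [if_pos hmid]
            rw [hFe]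
            have h2 : (pick e).2 ∈ s((pick e).1, (pick e).2) := Sym2.mem_mk_right _ _
            rwa [← hrep] at h2
          · have hFe : Fmap e = (pick e).1 := by
              simp only [hFmapdef]
              rw [if_neg hmid]
            rw [hFe]
            have h2 : (pick e).1 ∈ s((pick e).1, (pick e).2) := Sym2.mem_mk_left _ _
            rwa [← hrep] at h2
        have himg : ∀ e ∈ badOnceF, Fmap e ∈ badC ∪ W1 := by
          intro e he
          have heO : e ∈ onceF := Finset.mem_of_mem_filter e he
          have hng : ¬ goodP e := (Finset.mem_filter.1 he).2
          obtain ⟨hrep, hpC, hpnC⟩ := hpick e heO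
          by_cases hmid : (2/5*β ≤ (deg H (pick e).1 : ℝ) ∧ (deg H (pick e).1 : ℝ) ≤ 3/5*β)
          · have hFe : Fmap e = (pick e).2 := by
              simp only [hFmapdef]
              rw [if_pos hmid]
            rw [hFe]
            refine Finset.mem_union_right _ ?_
            rw [hW1def, Finset.mem_filter]
            refine ⟨Finset.mem_univ _, hpnC, ?_, ?_⟩
            · intro hX2
              obtain ⟨e', he', hpe'⟩ := (hmemX _).1 hX2
              have hne : e ≠ e' := by
                intro hEq
                have h1 : kC e = 0 := by rw [hEq]; exact (Finset.mem_filter.1 he').2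
                have h2 : kC e = 1 := (Finset.mem_filter.1 heO).2
                omega
              refine hMGpw e (Finset.mem_of_mem_filter e heO)
                e' (Finset.mem_of_mem_filter e' he') hne (pick e).2 ?_ hpe'
              have h2 : (pick e).2 ∈ s((pick e).1, (pick e).2) := Sym2.mem_mk_right _ _
              rwa [← hrep] at h2
            · by_contra hlow2
              push_neg at hlow2
              exact hng ⟨(pick e).1, (pick e).2, hrep, hpC, hpnC, hmid.1, hmid.2, hlow2⟩
          · have hFe : Fmap e = (pick e).1 := by
              simp only [hFmapdef]
              rw [if_neg hmid]
            rw [hFe]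
            refine Finset.mem_union_left _ ?_
            rw [hbadCdef, Finset.mem_filter]
            refine ⟨hpC, ?_⟩
            by_contra hcon
            push_neg at hcon
            exact hmid ⟨hcon.1, hcon.2⟩
        have hinj : Set.InjOn Fmap ↑badOnceF := by
          intro e he e' he' hEq
          by_contra hne
          have h1 := hFmem e (Finset.mem_of_mem_filter e (Finset.mem_coe.1 he))
          have h2 := hFmem e' (Finset.mem_of_mem_filter e' (Finset.mem_coe.1 he'))
          rw [hEq] at h1
          exact hMGpw e (Finset.mem_of_mem_filter _ (Finset.mem_of_mem_filter e (Finset.mem_coe.1 he)))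
            e' (Finset.mem_of_mem_filter _ (Finset.mem_of_mem_filter e' (Finset.mem_coe.1 he'))) hne
            (Fmap e') h1 h2
        calc badOnceF.card ≤ (badC ∪ W1).card :=
              Finset.card_le_card_of_injOn Fmap himg hinj
          _ ≤ badC.card + W1.card := Finset.card_union_le _ _
    have hfin : (onceF.card : ℕ) ≤ goodF.card + badC.card + W1.card := by omega
    exact_mod_cast hfin
  have hgood_nu : (goodF.card : ℝ) ≤ (nu H' : ℝ) := by
    have hsubMG : (↑goodF : Set (Sym2 V)) ⊆ MG := by
      intro e he
      rw [Finset.mem_coe] at he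
      exact (hmemMG e).1 (Finset.mem_of_mem_filter e (Finset.mem_of_mem_filter e he))
    have hmatch : IsMatchingSet H' (↑goodF : Set (Sym2 V)) := by
      constructor
      · intro e he
        have heMG := hsubMG he
        rw [Finset.mem_coe] at he
        have hgp : goodP e := (Finset.mem_filter.1 he).2
        obtain ⟨u, v, rfl, huC, hvC, h1, h2, h3⟩ := hgp
        have hadj : G.Adj u v := (SimpleGraph.mem_edgeSet G).1 (hMGmatch.1 heMG)
        have hH : H.Adj u v := by
          by_contra hnH
          have hl := hlow u v hadj hnH
          push_cast at hl
          have h4 : (0:ℝ) ≤ (deg H u : ℝ) := Nat.cast_nonneg _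
          nlinarith
        rw [SimpleGraph.mem_edgeSet, hH']
        show H.Adj u v ∧ _
        refine ⟨hH, Or.inr ⟨?_, ?_⟩⟩
        · rw [hVmid]
          constructor
          · show (0.4:ℝ)*β ≤ _
            rw [show (0.4:ℝ) = 2/5 by norm_num]
            exact h1
          · show _ ≤ (0.6:ℝ)*β
            rw [show (0.6:ℝ) = 3/5 by norm_num]
            exact h2
        · rw [hVlow]
          refine ⟨Nat.cast_nonneg _, ?_⟩
          show _ ≤ (0.2:ℝ)*β
          rw [show (0.2:ℝ) = 1/5 by norm_num]
          exact h3
      · exact Set.Pairwise.mono hsubMG hMGmatch.2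
    have := card_le_nu H' hmatch
    rw [Set.ncard_coe_finset] at this
    exact_mod_cast this
  -- final arithmetic
  have hεδ : ε ≤ δ/2 := by linarith
  have hδ0 : 0 < δ := by linarith
  have hm0 : (0:ℝ) ≤ (nu G : ℝ) := Nat.cast_nonneg _
  have hs_le_m : (bareF.card : ℝ) ≤ (nu G : ℝ) := by
    rw [← hMGfincard]
    exact_mod_cast Finset.card_le_card (Finset.filter_subset _ _)
  have hCm : (C.card : ℝ) ≤ (2/3 + δ) * (nu G : ℝ) := by
    refine le_trans ?_ hmu
    exact_mod_cast hCcard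
  have hεs : ε * (bareF.card : ℝ) ≤ (δ/2) * (nu G : ℝ) := by
    apply mul_le_mul hεδ hs_le_m (Nat.cast_nonneg _) (by linarith)
  have hsqrt : Real.sqrt δ ≤ 13/100 := by
    rw [show (13/100:ℝ) = Real.sqrt ((13/100)^2) by
      rw [Real.sqrt_sq (by norm_num)]]
    apply Real.sqrt_le_sqrt
    nlinarith
  have hsq : Real.sqrt δ * Real.sqrt δ = δ := Real.mul_self_sqrt (le_of_lt hδ0)
  have hsqnn : 0 ≤ Real.sqrt δ := Real.sqrt_nonneg _
  -- chain
  have hB : (C.card : ℝ) - (2-4*ε) * (bareF.card : ℝ) ≤ 5*δ*(nu G : ℝ) := by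
    nlinarith [hA4, hA5, hCm, hεs]
  have hgood_lb : (2/3 - 424*δ) * (nu G : ℝ) ≤ (goodF.card : ℝ) := by
    nlinarith [hA1, hA2, hA3, hA4, hA5, hA6, hB, hCm, hεs]
  have hfinal : (2/3 - 120*Real.sqrt δ) * (nu G : ℝ) ≤ (2/3 - 424*δ) * (nu G : ℝ) := by
    nlinarith [hsq, hsqnn, hsqrt, hm0]
  linarith [hgood_nu]
end
end

section
/- In the Hall-witness setup for a subgraph H of a bipartite graph G, the set S satisfies |S| ≥ 2·(μ(G) − μ(H)). -/
open scoped Classical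

noncomputable section

variable {V : Type*}

lemma mVerts_card_of_matching [Fintype V] (M : Set (Sym2 V))
    (hd : ∀ e ∈ M, ¬ e.IsDiag)
    (hp : M.Pairwise fun e f => ∀ v : V, v ∈ e → v ∉ f) :
    (mVerts M).ncard = 2 * M.ncard := by
  refine Set.Finite.induction_on (motive := fun M _ => (∀ e ∈ M, ¬ e.IsDiag) →
      (M.Pairwise fun e f => ∀ v : V, v ∈ e → v ∉ f) →
      (mVerts M).ncard = 2 * M.ncard) M (Set.toFinite M) ?_ ?_ hd hp
  · intro _ _; simp [mVerts]
  · intro e M' heM' hfin' ih hd hp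
    have hd' : ∀ f ∈ M', ¬ f.IsDiag := fun f hf => hd f (Set.mem_insert_of_mem _ hf)
    have hp' := hp.mono (Set.subset_insert _ _)
    have hsplit : mVerts (insert e M') = {x | x ∈ e} ∪ mVerts M' := by
      ext v; simp [mVerts, or_and_right, exists_or]
    have hedisj : Disjoint {x | x ∈ e} (mVerts M') := by
      rw [Set.disjoint_left]
      rintro v hv ⟨f, hf, hvf⟩
      exact hp (Set.mem_insert _ _) (Set.mem_insert_of_mem _ hf)
        (fun h => heM' (h ▸ hf)) v hv hvf
    have hecard : ({x | x ∈ e} : Set V).ncard = 2 := by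
      induction e using Sym2.ind with
      | _ u v =>
        have huv : u ≠ v := by
          have := hd _ (Set.mem_insert _ _); simpa [Sym2.isDiag_iff_proj_eq] using this
        have : ({x | x ∈ s(u, v)} : Set V) = {u, v} := by
          ext x; simp [Sym2.mem_iff]
        rw [this, Set.ncard_pair huv]
    rw [hsplit, Set.ncard_union_eq hedisj (Set.toFinite _) (Set.toFinite _),
      ih hd' hp', hecard, Set.ncard_insert_of_notMem heM' hfin']
    ring

/-- In the Hall-witness setup, `|S| ≥ 2(μ(G) − μ(H))`. -/
theorem hall_witness_S_lower_bound [Fintype V]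
(G H : SimpleGraph V) (L R : Set V) (n : ℕ)
    (hbipE : ∀ u v, G.Adj u v → (u ∈ L ∧ v ∈ R) ∨ (u ∈ R ∧ v ∈ L))
    (hdisj : Disjoint L R) (hcover : L ∪ R = Set.univ)
    (hLcard : L.ncard = n) (hRcard : R.ncard = n)
    (hHG : H ≤ G)
    (A : Set V) (hAL : A ⊆ L)
    (hwit : A.ncard + nu H = n + (nbhd H A).ncard)
    (Mstar : Set (Sym2 V)) (hMstar : IsMatchingSet G Mstar) (hMstarMax : Mstar.ncard = nu G)
    (Mbar : Set (Sym2 V)) (hMbar : Mbar = crossE Mstar A (R \ nbhd H A))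
    (S : Set V) (hS : S = mVerts Mbar) :
    2 * ((nu G : ℤ) - (nu H : ℤ)) ≤ (S.ncard : ℤ) := by
  classical
  obtain ⟨hMsub, hMpair⟩ := hMstar
  cases isEmpty_or_nonempty V with
  | inl hemp =>
    have hMe : Mstar = ∅ := Set.eq_empty_of_isEmpty Mstar
    have : nu G = 0 := by rw [← hMstarMax, hMe, Set.ncard_empty]
    rw [this]
    have : (0 : ℤ) ≤ S.ncard := Int.ofNat_nonneg _
    omega
  | inr hne => ?_
  set B := nbhd H A with hB
  have hMbarSub : Mbar ⊆ Mstar := by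
    intro e he; rw [hMbar] at he; exact he.1
  have hndiag : ∀ e ∈ Mbar, ¬ e.IsDiag := fun e he =>
    G.not_isDiag_of_mem_edgeSet (hMsub (hMbarSub he))
  have hScard : S.ncard = 2 * Mbar.ncard := by
    rw [hS]; exact mVerts_card_of_matching Mbar hndiag (hMpair.mono hMbarSub)
  set T := (L \ A) ∪ B with hT
  have key : ∀ u v : V, u ∈ L → v ∈ R → s(u, v) ∈ Mstar → s(u, v) ∉ Mbar →
      ∃ w, w ∈ T ∧ w ∈ s(u, v) := by
    intro u v huL hvR h1 h2
    by_cases huA : u ∈ A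
    · by_cases hvB : v ∈ B
      · exact ⟨v, Or.inr hvB, by simp⟩
      · exact absurd (by rw [hMbar]; exact ⟨h1, u, v, rfl, huA, hvR, hvB⟩) h2
    · exact ⟨u, Or.inl ⟨huL, huA⟩, by simp⟩
  have hex : ∀ e ∈ Mstar \ Mbar, ∃ w, w ∈ T ∧ w ∈ e := by
    intro e he
    induction e using Sym2.ind with
    | _ u v =>
      rcases hbipE u v (hMsub he.1) with ⟨huL, hvR⟩ | ⟨huR, hvL⟩
      · exact key u v huL hvR he.1 he.2
      · have hswap : s(u, v) = s(v, u) := Sym2.eq_swap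
        rw [hswap] at he ⊢
        exact key v u hvL huR he.1 he.2
  set f : Sym2 V → V := fun e => Classical.epsilon (fun v => v ∈ T ∧ v ∈ e) with hf
  have hfspec : ∀ e ∈ Mstar \ Mbar, f e ∈ T ∧ f e ∈ e := by
    intro e he
    simpa [hf] using Classical.epsilon_spec (hex e he)
  have hinj : Set.InjOn f (Mstar \ Mbar) := by
    intro e he e' he' heq
    by_contra hne
    exact hMpair he.1 he'.1 hne (f e) (hfspec e he).2 (heq ▸ (hfspec e' he').2)
  have hcount : (Mstar \ Mbar).ncard ≤ T.ncard :=
    Set.ncard_le_ncard_of_injOn f (fun e he => (hfspec e he).1) hinj (Set.toFinite T)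
  have hsplitM : Mbar.ncard + (Mstar \ Mbar).ncard = Mstar.ncard := by
    rw [← Set.ncard_union_eq (Set.disjoint_sdiff_right) (Set.toFinite _) (Set.toFinite _),
      Set.union_diff_cancel hMbarSub]
  have hTle : T.ncard ≤ (L \ A).ncard + B.ncard := Set.ncard_union_le _ _
  have hLA : (L \ A).ncard = n - A.ncard := by
    rw [Set.ncard_diff hAL, hLcard]
  have hAle : A.ncard ≤ n := hLcard ▸ Set.ncard_le_ncard hAL (Set.toFinite L)
  omega
end
end

section
/- In the Hall-witness setup for a subgraph H of a bipartite graph G, assume S and T are nonempty and m_S > 0. Then μ(H) ≥ (2·d̄(S) / (2·d̄(S) + d̄_S(T)))·μ(G). -/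
open scoped Classical

noncomputable section

variable {V : Type*}

lemma matchingSet_subset {G : SimpleGraph V} {M M' : Set (Sym2 V)}
    (hM : IsMatchingSet G M) (h : M' ⊆ M) : IsMatchingSet G M' :=
  ⟨h.trans hM.1, hM.2.mono h⟩

lemma mVerts_insert (e : Sym2 V) (M : Set (Sym2 V)) :
    mVerts (insert e M) = {x | x ∈ e} ∪ mVerts M := by
  ext v
  simp only [mVerts, Set.mem_setOf_eq, Set.mem_union, Set.mem_insert_iff]
  constructor
  · rintro ⟨f, (rfl | hf), hv⟩
    · exact Or.inl hv
    · exact Or.inr ⟨f, hf, hv⟩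
  · rintro (hv | ⟨f, hf, hv⟩)
    · exact ⟨e, Or.inl rfl, hv⟩
    · exact ⟨f, Or.inr hf, hv⟩

lemma mVerts_ncard [Fintype V] (G : SimpleGraph V) (M : Set (Sym2 V)) :
    IsMatchingSet G M → (mVerts M).ncard = 2 * M.ncard := by
  refine Set.Finite.induction_on (motive := fun M _ => IsMatchingSet G M → (mVerts M).ncard = 2 * M.ncard) M (Set.toFinite M) (fun _ => ?_) ?_
  · simp [mVerts]
  · intro e M' heM' hfin ih hM
    have hM' : IsMatchingSet G M' := matchingSet_subset hM (Set.subset_insert _ _)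
    have heE : e ∈ G.edgeSet := hM.1 (Set.mem_insert _ _)
    induction e using Sym2.ind with
    | _ u v =>
      have hadj : G.Adj u v := heE
      have hne : u ≠ v := hadj.ne
      have hev : {x | x ∈ s(u, v)} = ({u, v} : Set V) := by
        ext x; simp [Sym2.mem_iff]
      have hdisj : Disjoint ({x | x ∈ s(u, v)} : Set V) (mVerts M') := by
        rw [Set.disjoint_left]
        rintro x hx ⟨f, hfM', hxf⟩
        have hne' : s(u, v) ≠ f := fun h => heM' (h ▸ hfM')
        exact hM.2 (Set.mem_insert _ _) (Set.mem_insert_of_mem _ hfM') hne' x hx hxf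
      rw [mVerts_insert, Set.ncard_union_eq hdisj (Set.toFinite _) (Set.toFinite _),
        hev, Set.ncard_pair hne, ih hM',
        Set.ncard_insert_of_notMem heM' (Set.toFinite _)]
      ring

/-- In the Hall-witness setup, `μ(H) ≥ (2·d̄(S) / (2·d̄(S) + d̄_S(T)))·μ(G)`. -/
theorem hall_witness_nu_ratio [Fintype V]
(G H : SimpleGraph V) (L R : Set V) (n : ℕ)
    (hbipE : ∀ u v, G.Adj u v → (u ∈ L ∧ v ∈ R) ∨ (u ∈ R ∧ v ∈ L))
    (hdisj : Disjoint L R) (hcover : L ∪ R = Set.univ)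
    (hLcard : L.ncard = n) (hRcard : R.ncard = n)
    (hHG : H ≤ G)
    (A : Set V) (hAL : A ⊆ L)
    (hwit : A.ncard + nu H = n + (nbhd H A).ncard)
    (Mstar : Set (Sym2 V)) (hMstar : IsMatchingSet G Mstar) (hMstarMax : Mstar.ncard = nu G)
    (Mbar : Set (Sym2 V)) (hMbar : Mbar = crossE Mstar A (R \ nbhd H A))
    (S : Set V) (hS : S = mVerts Mbar)
(T : Set V) (hT : T = (L \ A) ∪ nbhd H A)
    (hSne : S.Nonempty) (hTne : T.Nonempty)
    (mS : ℕ) (hmS : mS = (between H S T).edgeSet.ncard) (hmS0 : 0 < mS)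
    (dbarS dbarT : ℝ)
    (hdbarS : dbarS = (mS : ℝ) / S.ncard) (hdbarT : dbarT = (mS : ℝ) / T.ncard) :
    (2 * dbarS / (2 * dbarS + dbarT)) * nu G ≤ (nu H : ℝ) := by

  classical
  set B := nbhd H A with hB
  -- B ⊆ R
  have hBR : B ⊆ R := by
    rintro v ⟨a, haA, hav⟩
    have hadj : G.Adj a v := hHG hav
    rcases hbipE a v hadj with ⟨haL, hvR⟩ | ⟨haR, hvL⟩
    · exact hvR
    · exact absurd haR (Set.disjoint_left.mp hdisj (hAL haA))
  -- cardinality of T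
  have hdisjT : Disjoint (L \ A) B := by
    refine Set.disjoint_left.mpr fun x hx hxB => ?_
    exact Set.disjoint_left.mp hdisj hx.1 (hBR hxB)
  have hTA : T.ncard = (L \ A).ncard + B.ncard := by
    rw [hT, Set.ncard_union_eq hdisjT (Set.toFinite _) (Set.toFinite _)]
  have hAn : A.ncard ≤ n := hLcard ▸ Set.ncard_le_ncard hAL (Set.toFinite L)
  have hLA : (L \ A).ncard = n - A.ncard := by
    rw [Set.ncard_diff hAL, hLcard]
  have hTnuH : T.ncard = nu H := by omega
  -- Mbar is a matching
  have hMbarSub : Mbar ⊆ Mstar := by rw [hMbar]; exact fun e he => he.1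
  have hMbarM : IsMatchingSet G Mbar := matchingSet_subset hMstar hMbarSub
  have hScard : S.ncard = 2 * Mbar.ncard := hS ▸ mVerts_ncard G Mbar hMbarM
  -- every edge of Mstar not in Mbar has a vertex in T
  have hex : ∀ e ∈ Mstar \ Mbar, ∃ w, w ∈ e ∧ w ∈ T := by
    rintro e ⟨heM, heMb⟩
    induction e using Sym2.ind with
    | _ u v =>
      have hadj : G.Adj u v := hMstar.1 heM
      have hnotc : ¬ (∃ x y, s(u, v) = s(x, y) ∧ x ∈ A ∧ y ∈ R \ B) := by
        intro hc
        exact heMb (hMbar ▸ ⟨heM, hc⟩)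
      rcases hbipE u v hadj with ⟨huL, hvR⟩ | ⟨huR, hvL⟩
      · by_cases huA : u ∈ A
        · by_cases hvB : v ∈ B
          · exact ⟨v, by simp [Sym2.mem_iff], hT ▸ Or.inr hvB⟩
          · exact absurd ⟨u, v, rfl, huA, hvR, hvB⟩ hnotc
        · exact ⟨u, by simp [Sym2.mem_iff], hT ▸ Or.inl ⟨huL, huA⟩⟩
      · by_cases hvA : v ∈ A
        · by_cases huB : u ∈ B
          · exact ⟨u, by simp [Sym2.mem_iff], hT ▸ Or.inr huB⟩
          · exact absurd ⟨v, u, Sym2.eq_swap, hvA, huR, huB⟩ hnotc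
        · exact ⟨v, by simp [Sym2.mem_iff], hT ▸ Or.inl ⟨hvL, hvA⟩⟩
  -- injection from Mstar \ Mbar into T
  have hrest : (Mstar \ Mbar).ncard ≤ T.ncard := by
    set f : Sym2 V → V := fun e =>
      if h : ∃ w, w ∈ e ∧ w ∈ T then h.choose else hTne.choose with hf
    have hfe : ∀ e ∈ Mstar \ Mbar, f e ∈ e ∧ f e ∈ T := by
      intro e he
      have h := hex e he
      simp only [hf, dif_pos h]
      exact h.choose_spec
    refine Set.ncard_le_ncard_of_injOn f (fun e he => (hfe e he).2) ?_ (Set.toFinite _)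
    intro e1 he1 e2 he2 hfeq
    by_contra hne
    have h1 := (hfe e1 he1).1
    have h2 := (hfe e2 he2).1
    rw [hfeq] at h1
    exact hMstar.2 he1.1 he2.1 hne (f e2) h1 h2
  -- key counting inequality
  have hsplit : (Mstar \ Mbar).ncard + Mbar.ncard = Mstar.ncard :=
    Set.ncard_diff_add_ncard_of_subset hMbarSub (Set.toFinite _)
  have hkeyN : 2 * nu G ≤ S.ncard + 2 * T.ncard := by
    rw [← hMstarMax]
    omega
  -- pass to reals
  have hs0 : (0 : ℝ) < S.ncard := by
    exact_mod_cast (Set.ncard_pos (Set.toFinite _)).mpr hSne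
  have ht0 : (0 : ℝ) < T.ncard := by
    exact_mod_cast (Set.ncard_pos (Set.toFinite _)).mpr hTne
  have hm0 : (0 : ℝ) < mS := by exact_mod_cast hmS0
  have hg0 : (0 : ℝ) ≤ nu G := Nat.cast_nonneg _
  have hkey : 2 * (nu G : ℝ) ≤ (S.ncard : ℝ) + 2 * T.ncard := by
    exact_mod_cast hkeyN
  have hnuH : (nu H : ℝ) = T.ncard := by exact_mod_cast hTnuH.symm
  rw [hdbarS, hdbarT, hnuH]
  set s : ℝ := (S.ncard : ℝ)
  set t : ℝ := (T.ncard : ℝ)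
  set m : ℝ := (mS : ℝ)
  have hD : 0 < 2 * (m / s) + m / t := by positivity
  rw [div_mul_eq_mul_div, div_le_iff₀ hD]
  have h1 : 2 * (m / s) * (nu G : ℝ) ≤ (m / s) * (s + 2 * t) := by
    have := mul_le_mul_of_nonneg_left hkey (le_of_lt (div_pos hm0 hs0))
    nlinarith [this]
  have h2 : (m / s) * (s + 2 * t) = t * (2 * (m / s) + m / t) := by
    field_simp
    ring
  linarith [h1, h2.le, h2.ge]
end
end

section
/- Let G = (L, R, E) be a bipartite graph, let M be a matching of G, let M* be a maximum matching of G, and let L1 be the number of connected components of the symmetric difference M ⊕ M* that consist of a single edge (length-one augmenting paths for M). Let U := V ∖ V(M). Then the bipartite subgraph F_L := G[V(M) ∩ L, U ∩ R] satisfies μ(F_L) ≥ μ(G) − |M| − L1, and symmetrically the bipartite subgraph F_R := G[V(M) ∩ R, U ∩ L] satisfies μ(F_R) ≥ μ(G) − |M| − L1. -/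
open scoped Classical

noncomputable section

variable {V : Type*}

lemma sym2_exists (e : Sym2 V) : ∃ a b : V, e = s(a, b) :=
  ⟨e.out.1, e.out.2, by exact (e.out_eq).symm⟩

lemma matching_card_le_nu [Fintype V] (H : SimpleGraph V) (N : Set (Sym2 V))
    (hN : IsMatchingSet H N) : N.ncard ≤ nu H := by
  apply le_csSup
  · refine ⟨(Set.univ : Set (Sym2 V)).ncard, ?_⟩
    rintro n ⟨M', _, rfl⟩
    exact Set.ncard_le_ncard (Set.subset_univ _) (Set.toFinite _)
  · exact ⟨N, hN, rfl⟩

lemma card_matchedR_le [Fintype V] (G : SimpleGraph V) (L R : Set V)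
    (hbipE : ∀ u v, G.Adj u v → (u ∈ L ∧ v ∈ R) ∨ (u ∈ R ∧ v ∈ L))
    (hdisj : Disjoint L R) (M : Set (Sym2 V)) (hM : IsMatchingSet G M) :
    (mVerts M ∩ R).ncard ≤ M.ncard := by
  set g : V → Sym2 V := fun v => if h : ∃ e, e ∈ M ∧ v ∈ e then h.choose else s(v, v) with hg
  apply Set.ncard_le_ncard_of_injOn g
  · rintro v ⟨⟨e, he, hve⟩, _⟩
    have h : ∃ e, e ∈ M ∧ v ∈ e := ⟨e, he, hve⟩
    simp only [hg, dif_pos h]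
    exact h.choose_spec.1
  · rintro v ⟨⟨ev, hev, hvev⟩, hvR⟩ w ⟨⟨ew, hew, hwew⟩, hwR⟩ hgvw
    have hv : ∃ e, e ∈ M ∧ v ∈ e := ⟨ev, hev, hvev⟩
    have hw : ∃ e, e ∈ M ∧ w ∈ e := ⟨ew, hew, hwew⟩
    simp only [hg, dif_pos hv, dif_pos hw] at hgvw
    obtain ⟨heM, hvee⟩ := hv.choose_spec
    obtain ⟨heM', hwee⟩ := hw.choose_spec
    rw [hgvw] at hvee
    obtain ⟨a, b, heq⟩ := sym2_exists hw.choose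
    rw [heq] at hvee hwee
    have hadj : G.Adj a b := by
      have := hM.1 heM'
      rw [heq] at this
      exact this
    have hvm := Sym2.mem_iff.mp hvee
    have hwm := Sym2.mem_iff.mp hwee
    rcases hbipE a b hadj with ⟨haL, hbR⟩ | ⟨haR, hbL⟩
    · have hv' : v = b := hvm.resolve_left
        (fun h => Set.disjoint_left.mp hdisj haL (h ▸ hvR))
      have hw' : w = b := hwm.resolve_left
        (fun h => Set.disjoint_left.mp hdisj haL (h ▸ hwR))
      rw [hv', hw']
    · have hv' : v = a := hvm.resolve_right
        (fun h => Set.disjoint_left.mp hdisj hbL (h ▸ hvR))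
      have hw' : w = a := hwm.resolve_right
        (fun h => Set.disjoint_left.mp hdisj hbL (h ▸ hwR))
      rw [hv', hw']


lemma one_side [Fintype V] (G : SimpleGraph V) (L R : Set V)
    (hbipE : ∀ u v, G.Adj u v → (u ∈ L ∧ v ∈ R) ∨ (u ∈ R ∧ v ∈ L))
    (hdisj : Disjoint L R)
    (M Mstar : Set (Sym2 V)) (hM : IsMatchingSet G M)
    (hMstar : IsMatchingSet G Mstar)
    (D : Set (Sym2 V)) (hD : D = (M \ Mstar) ∪ (Mstar \ M))
    (L1 : ℕ) (hL1 : L1 = {e ∈ D | ∀ f ∈ D, f ≠ e → ∀ v : V, v ∈ e → v ∉ f}.ncard)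
    (U : Set V) (hU : U = Set.univ \ mVerts M)
    (FL : SimpleGraph V)
    (hFL : FL = between G (mVerts M ∩ L) (U ∩ R)) :
    Mstar.ncard ≤ M.ncard + L1 + nu FL := by
  set ML : Set (Sym2 V) :=
    {e | e ∈ Mstar ∧ ∃ u v, e = s(u, v) ∧ u ∈ mVerts M ∩ L ∧ v ∈ U ∩ R} with hMLdef
  set X : Set (Sym2 V) := {e | e ∈ Mstar ∧ ∃ v, v ∈ e ∧ v ∈ mVerts M ∩ R} with hXdef
  set C : Set (Sym2 V) := {e | e ∈ Mstar ∧ ∀ v, v ∈ e → v ∈ U} with hCdef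
  -- cover
  have hcov : Mstar ⊆ X ∪ ML ∪ C := by
    intro e he
    obtain ⟨a, b, heq⟩ := sym2_exists e
    have hadj : G.Adj a b := by
      have := hMstar.1 he; rw [heq] at this; exact this
    have hamem : a ∈ e := by rw [heq]; exact Sym2.mem_mk_left a b
    have hbmem : b ∈ e := by rw [heq]; exact Sym2.mem_mk_right a b
    rcases hbipE a b hadj with ⟨haL, hbR⟩ | ⟨haR, hbL⟩
    · by_cases hbM : b ∈ mVerts M
      · exact Or.inl (Or.inl ⟨he, b, hbmem, hbM, hbR⟩)
      · have hbU : b ∈ U := by rw [hU]; exact ⟨Set.mem_univ b, hbM⟩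
        by_cases haM : a ∈ mVerts M
        · exact Or.inl (Or.inr ⟨he, a, b, heq, ⟨haM, haL⟩, ⟨hbU, hbR⟩⟩)
        · refine Or.inr ⟨he, ?_⟩
          intro v hv
          rw [heq] at hv
          rcases Sym2.mem_iff.mp hv with rfl | rfl
          · rw [hU]; exact ⟨Set.mem_univ v, haM⟩
          · exact hbU
    · by_cases haM : a ∈ mVerts M
      · exact Or.inl (Or.inl ⟨he, a, hamem, haM, haR⟩)
      · have haU : a ∈ U := by rw [hU]; exact ⟨Set.mem_univ a, haM⟩
        by_cases hbM : b ∈ mVerts M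
        · exact Or.inl (Or.inr ⟨he, b, a, heq.trans (Sym2.eq_swap), ⟨hbM, hbL⟩, ⟨haU, haR⟩⟩)
        · refine Or.inr ⟨he, ?_⟩
          intro v hv
          rw [heq] at hv
          rcases Sym2.mem_iff.mp hv with rfl | rfl
          · exact haU
          · rw [hU]; exact ⟨Set.mem_univ v, hbM⟩
  have h1 : Mstar.ncard ≤ X.ncard + ML.ncard + C.ncard := by
    refine (Set.ncard_le_ncard hcov (Set.toFinite _)).trans ?_
    exact (Set.ncard_union_le _ _).trans (Nat.add_le_add_right (Set.ncard_union_le _ _) _)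
  -- X bound
  have hX : X.ncard ≤ M.ncard := by
    refine le_trans ?_ (card_matchedR_le G L R hbipE hdisj M hM)
    set f : Sym2 V → V :=
      fun e => if h : ∃ v, v ∈ e ∧ v ∈ mVerts M ∩ R then h.choose else e.out.1 with hf
    apply Set.ncard_le_ncard_of_injOn f
    · rintro e ⟨-, hex⟩
      simp only [hf, dif_pos hex]
      exact hex.choose_spec.2
    · rintro e1 ⟨he1, hex1⟩ e2 ⟨he2, hex2⟩ hfe
      simp only [hf, dif_pos hex1, dif_pos hex2] at hfe
      by_contra hne
      exact hMstar.2 he1 he2 hne hex1.choose hex1.choose_spec.1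
        (hfe ▸ hex2.choose_spec.1)
  -- C bound
  have hC : C.ncard ≤ L1 := by
    rw [hL1]
    refine Set.ncard_le_ncard ?_ (Set.toFinite _)
    rintro e ⟨heS, hall⟩
    have heD : e ∈ D := by
      rw [hD]
      refine Or.inr ⟨heS, fun heM => ?_⟩
      have h1 : e.out.1 ∈ mVerts M := ⟨e, heM, Sym2.out_fst_mem e⟩
      have h2 := hall e.out.1 (Sym2.out_fst_mem e)
      rw [hU] at h2
      exact h2.2 h1
    refine ⟨heD, ?_⟩
    intro f hfD hne v hve hvf
    rw [hD] at hfD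
    rcases hfD with hf | hf
    · have : v ∈ mVerts M := ⟨f, hf.1, hvf⟩
      have h2 := hall v hve
      rw [hU] at h2
      exact h2.2 this
    · exact hMstar.2 hf.1 heS hne v hvf hve
  -- ML bound
  have hML : ML.ncard ≤ nu FL := by
    apply matching_card_le_nu
    constructor
    · rintro e ⟨he, u, v, heq, hu, hv⟩
      rw [hFL, heq]
      rw [SimpleGraph.mem_edgeSet]
      have hadj : G.Adj u v := by
        have := hMstar.1 he; rw [heq] at this; exact this
      show G.Adj u v ∧ _
      exact ⟨hadj, Or.inl ⟨hu, hv⟩⟩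
    · exact hMstar.2.mono (fun e he => he.1)
  omega

/-- In a bipartite graph `G = (L, R)` with matching `M`, maximum matching `M*` and `L1`
single-edge components of `M ⊕ M*`, the subgraphs `F_L = G[V(M) ∩ L, U ∩ R]` and
`F_R = G[V(M) ∩ R, U ∩ L]` satisfy `μ(F_L), μ(F_R) ≥ μ(G) − |M| − L1`. -/
theorem endpoint_subgraphs_large_matching [Fintype V] (G : SimpleGraph V) (L R : Set V)
    (hbipE : ∀ u v, G.Adj u v → (u ∈ L ∧ v ∈ R) ∨ (u ∈ R ∧ v ∈ L))
    (hdisj : Disjoint L R) (hcover : L ∪ R = Set.univ)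
    (M Mstar : Set (Sym2 V)) (hM : IsMatchingSet G M)
    (hMstar : IsMatchingSet G Mstar) (hMstarMax : Mstar.ncard = nu G)
    (D : Set (Sym2 V)) (hD : D = (M \ Mstar) ∪ (Mstar \ M))
    (L1 : ℕ) (hL1 : L1 = {e ∈ D | ∀ f ∈ D, f ≠ e → ∀ v : V, v ∈ e → v ∉ f}.ncard)
    (U : Set V) (hU : U = Set.univ \ mVerts M)
    (FL FR : SimpleGraph V)
    (hFL : FL = between G (mVerts M ∩ L) (U ∩ R))
    (hFR : FR = between G (mVerts M ∩ R) (U ∩ L)) :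
    (nu G : ℤ) - (M.ncard : ℤ) - (L1 : ℤ) ≤ (nu FL : ℤ) ∧
      (nu G : ℤ) - (M.ncard : ℤ) - (L1 : ℤ) ≤ (nu FR : ℤ) := by
  constructor
  · have h := one_side G L R hbipE hdisj M Mstar hM hMstar D hD L1 hL1 U hU FL hFL
    omega
  · have h := one_side G R L (fun u v hadj => (hbipE u v hadj).symm) hdisj.symm
      M Mstar hM hMstar D hD L1 hL1 U hU FR hFR
    omega
end
end

section
/- Let G be a graph, let M be a matching of G, let M' ⊆ M, and for each edge e ∈ M' fix an orientation e = (u_e, v_e). Let N_L and N_R be matchings of G such that: every edge of N_L joins u_e for some e ∈ M' to a vertex not in V(M); every edge of N_R joins v_e for some e ∈ M' to a vertex not in V(M); and no vertex outside V(M) is an endpoint of both an edge of N_L and an edge of N_R. Then μ(G) ≥ |M| + |{e ∈ M' : u_e ∈ V(N_L) and v_e ∈ V(N_R)}|. -/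
open scoped Classical

noncomputable section

variable {V : Type*}

lemma matching_eq_of_mem {G : SimpleGraph V} {N : Set (Sym2 V)} (hN : IsMatchingSet G N)
    {e f : Sym2 V} (he : e ∈ N) (hf : f ∈ N) {v : V} (hv : v ∈ e) (hv' : v ∈ f) : e = f := by
  by_contra h
  exact hN.2 he hf h v hv hv'

theorem augment_by_disjoint_wings' [Fintype V] (G : SimpleGraph V)
    (M M' : Set (Sym2 V)) (hM : IsMatchingSet G M) (hM'M : M' ⊆ M)
    (uo vo : Sym2 V → V) (hor : ∀ e ∈ M', e = s(uo e, vo e))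
    (NL NR : Set (Sym2 V)) (hNL : IsMatchingSet G NL) (hNR : IsMatchingSet G NR)
    (hNLe : ∀ f ∈ NL, ∃ e ∈ M', ∃ w, w ∉ mVerts M ∧ f = s(uo e, w))
    (hNRe : ∀ f ∈ NR, ∃ e ∈ M', ∃ w, w ∉ mVerts M ∧ f = s(vo e, w))
    (hsep : ∀ w, w ∉ mVerts M → w ∈ mVerts NL → w ∉ mVerts NR) :
    M.ncard + {e ∈ M' | uo e ∈ mVerts NL ∧ vo e ∈ mVerts NR}.ncard ≤ nu G := by
  classical
  set S := {e ∈ M' | uo e ∈ mVerts NL ∧ vo e ∈ mVerts NR} with hSdef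
  have hSM' : S ⊆ M' := fun e he => he.1
  have hSM : S ⊆ M := fun e he => hM'M he.1
  have huoM : ∀ e ∈ M', uo e ∈ e := fun e he => by
    have h : uo e ∈ s(uo e, vo e) := Sym2.mem_mk_left _ _
    rwa [← hor e he] at h
  have hvoM : ∀ e ∈ M', vo e ∈ e := fun e he => by
    have h : vo e ∈ s(uo e, vo e) := Sym2.mem_mk_right _ _
    rwa [← hor e he] at h
  have huoV : ∀ e ∈ M', uo e ∈ mVerts M := fun e he => ⟨e, hM'M he, huoM e he⟩
  have hvoV : ∀ e ∈ M', vo e ∈ mVerts M := fun e he => ⟨e, hM'M he, hvoM e he⟩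
  have hne : ∀ e ∈ M', uo e ≠ vo e := by
    intro e he
    have : e ∈ G.edgeSet := hM.1 (hM'M he)
    rw [hor e he, SimpleGraph.mem_edgeSet] at this
    exact this.ne
  set L := {f ∈ NL | ∃ e ∈ S, uo e ∈ f} with hLdef
  set R := {f ∈ NR | ∃ e ∈ S, vo e ∈ f} with hRdef
  -- structure of L and R edges
  have hLstruct : ∀ f ∈ L, ∃ e ∈ S, ∃ w, w ∉ mVerts M ∧ f = s(uo e, w) := by
    rintro f ⟨hfNL, e, heS, huef⟩
    obtain ⟨e', he', w, hw, hfw⟩ := hNLe f hfNL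
    rw [hfw, Sym2.mem_iff] at huef
    rcases huef with h | h
    · exact ⟨e, heS, w, hw, by rw [hfw, h]⟩
    · exact absurd (h ▸ huoV e (hSM' heS)) hw
  have hRstruct : ∀ f ∈ R, ∃ e ∈ S, ∃ w, w ∉ mVerts M ∧ f = s(vo e, w) := by
    rintro f ⟨hfNR, e, heS, hvef⟩
    obtain ⟨e', he', w, hw, hfw⟩ := hNRe f hfNR
    rw [hfw, Sym2.mem_iff] at hvef
    rcases hvef with h | h
    · exact ⟨e, heS, w, hw, by rw [hfw, h]⟩
    · exact absurd (h ▸ hvoV e (hSM' heS)) hw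
  -- cross disjointness lemmas
  have keyML : ∀ e ∈ M \ S, ∀ f ∈ L, ∀ v, v ∈ e → v ∈ f → False := by
    rintro e ⟨heM, heS⟩ f hfL v hve hvf
    obtain ⟨e', he'S, w, hw, hfw⟩ := hLstruct f hfL
    rw [hfw, Sym2.mem_iff] at hvf
    rcases hvf with h | h
    · have : e = e' := matching_eq_of_mem hM heM (hSM he'S) hve
        (h ▸ huoM e' (hSM' he'S))
      exact heS (this ▸ he'S)
    · exact hw ⟨e, heM, h ▸ hve⟩
  have keyMR : ∀ e ∈ M \ S, ∀ f ∈ R, ∀ v, v ∈ e → v ∈ f → False := by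
    rintro e ⟨heM, heS⟩ f hfR v hve hvf
    obtain ⟨e', he'S, w, hw, hfw⟩ := hRstruct f hfR
    rw [hfw, Sym2.mem_iff] at hvf
    rcases hvf with h | h
    · have : e = e' := matching_eq_of_mem hM heM (hSM he'S) hve
        (h ▸ hvoM e' (hSM' he'S))
      exact heS (this ▸ he'S)
    · exact hw ⟨e, heM, h ▸ hve⟩
  have keyLR : ∀ e ∈ L, ∀ f ∈ R, ∀ v, v ∈ e → v ∈ f → False := by
    intro e heL f hfR v hve hvf
    obtain ⟨e₁, he₁S, w, hw, hew⟩ := hLstruct e heL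
    obtain ⟨e₂, he₂S, w', hw', hfw⟩ := hRstruct f hfR
    rw [hew, Sym2.mem_iff] at hve
    rw [hfw, Sym2.mem_iff] at hvf
    rcases hve with h1 | h1 <;> rcases hvf with h2 | h2
    · have huv : uo e₁ = vo e₂ := by rw [← h1, h2]
      have heq : e₁ = e₂ := matching_eq_of_mem hM (hSM he₁S) (hSM he₂S)
        (huoM e₁ (hSM' he₁S)) (by rw [huv]; exact hvoM e₂ (hSM' he₂S))
      exact hne e₁ (hSM' he₁S) (by rw [huv, heq])
    · exact hw' (by rw [← h2, h1]; exact huoV e₁ (hSM' he₁S))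
    · exact hw (by rw [← h1, h2]; exact hvoV e₂ (hSM' he₂S))
    · have hwNL : w ∈ mVerts NL := ⟨e, heL.1, hew ▸ Sym2.mem_mk_right _ _⟩
      have hwNR : w ∈ mVerts NR := ⟨f, hfR.1, by
        rw [hfw]; rw [h1] at h2; rw [h2]; exact Sym2.mem_mk_right _ _⟩
      exact hsep w hw hwNL hwNR
  -- the augmented matching
  set T := (M \ S) ∪ L ∪ R with hTdef
  have key : ∀ e ∈ T, ∀ f ∈ T, ∀ v, v ∈ e → v ∈ f → e = f := by
    intro e he f hf v hve hvf
    rcases he with (he | he) | he <;> rcases hf with (hf | hf) | hf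
    · exact matching_eq_of_mem hM he.1 hf.1 hve hvf
    · exact absurd (keyML e he f hf v hve hvf) (by simp)
    · exact absurd (keyMR e he f hf v hve hvf) (by simp)
    · exact absurd (keyML f hf e he v hvf hve) (by simp)
    · exact matching_eq_of_mem hNL he.1 hf.1 hve hvf
    · exact absurd (keyLR e he f hf v hve hvf) (by simp)
    · exact absurd (keyMR f hf e he v hvf hve) (by simp)
    · exact absurd (keyLR f hf e he v hvf hve) (by simp)
    · exact matching_eq_of_mem hNR he.1 hf.1 hve hvf
  have hTmatch : IsMatchingSet G T := by
    constructor
    · rintro e ((he | he) | he)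
      · exact hM.1 he.1
      · exact hNL.1 he.1
      · exact hNR.1 he.1
    · intro e he f hf henef v hve hvf
      exact henef (key e he f hf v hve hvf)
  -- disjointness for counting
  have hdLM : Disjoint (M \ S) L := by
    rw [Set.disjoint_left]
    intro f hf1 hf2
    obtain ⟨e', he'S, w, hw, hfw⟩ := hLstruct f hf2
    exact keyML f hf1 f hf2 (uo e') (by rw [hfw]; exact Sym2.mem_mk_left _ _)
      (by rw [hfw]; exact Sym2.mem_mk_left _ _)
  have hdR : Disjoint ((M \ S) ∪ L) R := by
    rw [Set.disjoint_left]
    rintro f (hf1 | hf1) hf2 <;>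
      obtain ⟨e', he'S, w, hw, hfw⟩ := hRstruct f hf2
    · exact keyMR f hf1 f hf2 (vo e') (by rw [hfw]; exact Sym2.mem_mk_left _ _)
        (by rw [hfw]; exact Sym2.mem_mk_left _ _)
    · exact keyLR f hf1 f hf2 (vo e') (by rw [hfw]; exact Sym2.mem_mk_left _ _)
        (by rw [hfw]; exact Sym2.mem_mk_left _ _)
  -- cardinality estimates
  have hSL : S.ncard ≤ L.ncard := by
    have hmaps : ∀ e ∈ S, ∀ hhh : ∃ g, g ∈ NL ∧ uo e ∈ g, True := fun _ _ _ => trivial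
    set fL : Sym2 V → Sym2 V := fun e =>
      if h : ∃ g, g ∈ NL ∧ uo e ∈ g then h.choose else e with hfL
    have hfLspec : ∀ e ∈ S, fL e ∈ NL ∧ uo e ∈ fL e := by
      intro e heS
      obtain ⟨g, hg, hug⟩ := heS.2.1
      have h : ∃ g, g ∈ NL ∧ uo e ∈ g := ⟨g, hg, hug⟩
      simp only [hfL, dif_pos h]
      exact h.choose_spec
    apply Set.ncard_le_ncard_of_injOn fL
    · intro e heS
      exact ⟨(hfLspec e heS).1, e, heS, (hfLspec e heS).2⟩
    · intro e₁ h₁ e₂ h₂ hfe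
      obtain ⟨hg₁, hu₁⟩ := hfLspec e₁ h₁
      obtain ⟨hg₂, hu₂⟩ := hfLspec e₂ h₂
      rw [hfe] at hu₁
      exact matching_eq_of_mem hM (hSM h₁) (hSM h₂) (huoM e₁ (hSM' h₁)) (by
        obtain ⟨e', he', w, hw, hfw⟩ := hNLe _ hg₂
        rw [hfw, Sym2.mem_iff] at hu₁ hu₂
        rcases hu₁ with h | h
        · rcases hu₂ with h' | h'
          · rw [h, ← h']; exact huoM e₂ (hSM' h₂)
          · exact absurd (h' ▸ huoV e₂ (hSM' h₂)) hw
        · exact absurd (h ▸ huoV e₁ (hSM' h₁)) hw)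
  have hSR : S.ncard ≤ R.ncard := by
    set fR : Sym2 V → Sym2 V := fun e =>
      if h : ∃ g, g ∈ NR ∧ vo e ∈ g then h.choose else e with hfR
    have hfRspec : ∀ e ∈ S, fR e ∈ NR ∧ vo e ∈ fR e := by
      intro e heS
      obtain ⟨g, hg, hug⟩ := heS.2.2
      have h : ∃ g, g ∈ NR ∧ vo e ∈ g := ⟨g, hg, hug⟩
      simp only [hfR, dif_pos h]
      exact h.choose_spec
    apply Set.ncard_le_ncard_of_injOn fR
    · intro e heS
      exact ⟨(hfRspec e heS).1, e, heS, (hfRspec e heS).2⟩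
    · intro e₁ h₁ e₂ h₂ hfe
      obtain ⟨hg₁, hu₁⟩ := hfRspec e₁ h₁
      obtain ⟨hg₂, hu₂⟩ := hfRspec e₂ h₂
      rw [hfe] at hu₁
      exact matching_eq_of_mem hM (hSM h₁) (hSM h₂) (hvoM e₁ (hSM' h₁)) (by
        obtain ⟨e', he', w, hw, hfw⟩ := hNRe _ hg₂
        rw [hfw, Sym2.mem_iff] at hu₁ hu₂
        rcases hu₁ with h | h
        · rcases hu₂ with h' | h'
          · rw [h, ← h']; exact hvoM e₂ (hSM' h₂)
          · exact absurd (h' ▸ hvoV e₂ (hSM' h₂)) hw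
        · exact absurd (h ▸ hvoV e₁ (hSM' h₁)) hw)
  have hTcard : M.ncard + S.ncard ≤ T.ncard := by
    have h1 : T.ncard = ((M \ S) ∪ L).ncard + R.ncard :=
      Set.ncard_union_eq hdR (Set.toFinite _) (Set.toFinite _)
    have h2 : ((M \ S) ∪ L).ncard = (M \ S).ncard + L.ncard :=
      Set.ncard_union_eq hdLM (Set.toFinite _) (Set.toFinite _)
    have h3 : (M \ S).ncard = M.ncard - S.ncard := Set.ncard_diff hSM (Set.toFinite _)
    have h4 : S.ncard ≤ M.ncard := Set.ncard_le_ncard hSM (Set.toFinite _)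
    omega
  refine le_trans hTcard ?_
  apply le_csSup
  · refine ⟨Nat.card (Sym2 V), ?_⟩
    rintro n ⟨M₂, _, rfl⟩
    rw [← Set.ncard_univ]
    exact Set.ncard_le_ncard (Set.subset_univ _) (Set.toFinite _)
  · exact ⟨T, hTmatch, rfl⟩

/-- If `M' ⊆ M` with each edge `e ∈ M'` oriented as `(u_e, v_e)`, and `N_L`, `N_R` are
matchings of `G` matching, respectively, vertices `u_e` and `v_e` to vertices outside
`V(M)`, with no vertex outside `V(M)` used by both, then
`μ(G) ≥ |M| + |{e ∈ M' : u_e ∈ V(N_L) ∧ v_e ∈ V(N_R)}|`. -/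
theorem augment_by_disjoint_wings [Fintype V] (G : SimpleGraph V)
    (M M' : Set (Sym2 V)) (hM : IsMatchingSet G M) (hM'M : M' ⊆ M)
    (uo vo : Sym2 V → V) (hor : ∀ e ∈ M', e = s(uo e, vo e))
    (NL NR : Set (Sym2 V)) (hNL : IsMatchingSet G NL) (hNR : IsMatchingSet G NR)
    (hNLe : ∀ f ∈ NL, ∃ e ∈ M', ∃ w, w ∉ mVerts M ∧ f = s(uo e, w))
    (hNRe : ∀ f ∈ NR, ∃ e ∈ M', ∃ w, w ∉ mVerts M ∧ f = s(vo e, w))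
    (hsep : ∀ w, w ∉ mVerts M → w ∈ mVerts NL → w ∉ mVerts NR) :
    M.ncard + {e ∈ M' | uo e ∈ mVerts NL ∧ vo e ∈ mVerts NR}.ncard ≤ nu G := by
  exact augment_by_disjoint_wings' G M M' hM hM'M uo vo hor NL NR hNL hNR hNLe hNRe hsep
end
end
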